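/- arXiv:2003.11992 — 19 statements merged into one kernel-verified Lean document; each statement's English description precedes it below -/
import Mathlib

section
/- If A is a point of the plane, r > 0, and B, C, D, E are points with dist A B = dist A C = dist A D = dist A E = r, dist B C = dist C D = dist D E = r, D ≠ B and E ≠ C, then A is the midpoint of B and E (equivalently E = 2A − B, so B, A, E are collinear and dist B E = 2r). -/
/-- Key planar algebra step: if `b`, `c`, `d` all have norm `r`, and
`b`, `d` are both at distance `r` from `c` and `b ≠ d`, then `b + d = c`. -/
lemma mohr_step (r b0 b1 c0 c1 d0 d1 : ℝ) (hr : 0 < r)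
    (hb : b0^2 + b1^2 = r^2) (hc : c0^2 + c1^2 = r^2) (hd : d0^2 + d1^2 = r^2)
    (hbc : (b0-c0)^2 + (b1-c1)^2 = r^2) (hcd : (c0-d0)^2 + (c1-d1)^2 = r^2)
    (hne : ¬ (b0 = d0 ∧ b1 = d1)) :
    b0 + d0 = c0 ∧ b1 + d1 = c1 := by
  have e1 : b0*c0 + b1*c1 = r^2/2 := by linear_combination (hb + hc - hbc)/2
  have e2 : c0*d0 + c1*d1 = r^2/2 := by linear_combination (hc + hd - hcd)/2
  have orth1 : c0*(b0-d0) + c1*(b1-d1) = 0 := by linear_combination e1 - e2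
  have orth2 : (b0-d0)*(b0+d0-c0) + (b1-d1)*(b1+d1-c1) = 0 := by
    linear_combination hb - hd - orth1
  have orthc : c0*(b0+d0-c0) + c1*(b1+d1-c1) = 0 := by linear_combination e1 + e2 - hc
  set det := c0*(b1-d1) - c1*(b0-d0) with hdetdef
  have hdet2 : det^2 = r^2 * ((b0-d0)^2 + (b1-d1)^2) := by
    rw [hdetdef]
    linear_combination ((b0-d0)^2 + (b1-d1)^2) * hc
      - (c0*(b0-d0) + c1*(b1-d1)) * orth1
  have hv : 0 < (b0-d0)^2 + (b1-d1)^2 := by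
    rcases not_and_or.mp hne with h | h
    · have : (b0-d0) ≠ 0 := sub_ne_zero.mpr h
      positivity
    · have : (b1-d1) ≠ 0 := sub_ne_zero.mpr h
      positivity
  have hdet : det ≠ 0 := by
    intro h
    rw [h] at hdet2
    nlinarith [mul_pos (pow_pos hr 2) hv]
  have hu0 : (b0+d0-c0) * det = 0 := by
    rw [hdetdef]; linear_combination (b1-d1)*orthc - c1*orth2
  have hu1 : (b1+d1-c1) * det = 0 := by
    rw [hdetdef]; linear_combination c0*orth2 - (b0-d0)*orthc
  constructor
  · have := (mul_eq_zero.mp hu0).resolve_right hdet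
    linarith
  · have := (mul_eq_zero.mp hu1).resolve_right hdet
    linarith

lemma dist_sq_two (x y : EuclideanSpace ℝ (Fin 2)) (r : ℝ) (h : dist x y = r) :
    (x 0 - y 0)^2 + (x 1 - y 1)^2 = r^2 := by
  have h1 : dist x y ^ 2 = ∑ i, dist (x i) (y i) ^ 2 := by
    rw [EuclideanSpace.dist_eq]
    rw [Real.sq_sqrt (by positivity)]
  rw [h] at h1
  rw [Fin.sum_univ_two, Real.dist_eq, Real.dist_eq, sq_abs, sq_abs] at h1
  linarith

/-- Mohr, *Euclides Danicus*, First Part, Corollary to Proposition 2: stepping the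
compass three times with opening `r` around the circle of center `A` and radius `r`,
starting from `B`, reaches the point `E` diametrically opposite to `B`; that is,
`A` is the midpoint of `B` and `E`. -/
theorem mohr_corollary_prop2 (A B C D E : EuclideanSpace ℝ (Fin 2)) (r : ℝ) (hr : 0 < r)
    (hAB : dist A B = r) (hAC : dist A C = r) (hAD : dist A D = r) (hAE : dist A E = r)
    (hBC : dist B C = r) (hCD : dist C D = r) (hDE : dist D E = r)
    (hDB : D ≠ B) (hEC : E ≠ C) :
    A = midpoint ℝ B E := by
  have hb := dist_sq_two A B r hAB
  have hc := dist_sq_two A C r hAC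
  have hd := dist_sq_two A D r hAD
  have he := dist_sq_two A E r hAE
  have hbc := dist_sq_two B C r hBC
  have hcd := dist_sq_two C D r hCD
  have hde := dist_sq_two D E r hDE
  -- step 1 : (A-B) + (A-D) = (A-C)
  have s1 := mohr_step r (A 0 - B 0) (A 1 - B 1) (A 0 - C 0) (A 1 - C 1)
      (A 0 - D 0) (A 1 - D 1) hr hb hc hd (by linear_combination hbc)
      (by linear_combination hcd)
      (by rintro ⟨h0, h1⟩
          apply hDB
          ext i
          fin_cases i
          · show D 0 = B 0; linarith
          · show D 1 = B 1; linarith)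
  -- step 2 : (A-C) + (A-E) = (A-D)
  have s2 := mohr_step r (A 0 - C 0) (A 1 - C 1) (A 0 - D 0) (A 1 - D 1)
      (A 0 - E 0) (A 1 - E 1) hr hc hd he (by linear_combination hcd)
      (by linear_combination hde)
      (by rintro ⟨h0, h1⟩
          apply hEC
          ext i
          fin_cases i
          · show E 0 = C 0; linarith
          · show E 1 = C 1; linarith)
  obtain ⟨s10, s11⟩ := s1
  obtain ⟨s20, s21⟩ := s2
  have h0 : A 0 = (B 0 + E 0) / 2 := by linarith
  have h1 : A 1 = (B 1 + E 1) / 2 := by linarith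
  ext i
  have : (midpoint ℝ B E) i = (B i + E i) / 2 := by
    rw [midpoint_eq_smul_add]
    simp [PiLp.smul_apply, PiLp.add_apply]
    ring
  rw [this]
  fin_cases i
  · exact h0
  · exact h1
end

section
/- Let A ≠ B be points of the plane and r = dist A B. Let E be the point such that A is the midpoint of B and E (E = 2A − B). Let F be a point with dist B F = 2r and dist E F = r, and let L be a point with dist B L = r and dist E L = dist F A. Then dist A L = r/2. -/
lemma midpoint_dist_sq (x y z : EuclideanSpace ℝ (Fin 2)) :
    dist (midpoint ℝ x y) z ^ 2 =
      (dist x z ^ 2 + dist y z ^ 2) / 2 - dist x y ^ 2 / 4 := by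
  have h1 : dist (midpoint ℝ x y) z = ‖((x - z) + (y - z))‖ / 2 := by
    rw [dist_eq_norm, midpoint_eq_smul_add, invOf_eq_inv]
    rw [show (2:ℝ)⁻¹ • (x + y) - z = (2:ℝ)⁻¹ • ((x - z) + (y - z)) by module]
    rw [norm_smul]; simp [div_eq_inv_mul]
  have h2 : dist x y = ‖(x - z) - (y - z)‖ := by
    rw [dist_eq_norm]; congr 1; abel
  have hpar := parallelogram_law_with_norm ℝ (x - z) (y - z)
  have hx : dist x z = ‖x - z‖ := dist_eq_norm _ _
  have hy : dist y z = ‖y - z‖ := dist_eq_norm _ _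
  rw [h1, h2, hx, hy]
  nlinarith [hpar]

/-- Mohr, *Euclides Danicus*, First Part, Proposition 15 (second construction):
with `E` diametrically opposite `B` on the circle of center `A` and radius
`r = dist A B`, `F` a point with `dist B F = 2r` and `dist E F = r`, and `L` a point
with `dist B L = r` and `dist E L = dist F A`, the point `L` is at distance `r / 2`
from `A`. -/
theorem mohr_prop15_midpoint (A B E F L : EuclideanSpace ℝ (Fin 2)) (r : ℝ)
    (hAB : A ≠ B) (hr : r = dist A B)
    (hE : A = midpoint ℝ B E)
    (hBF : dist B F = 2 * r) (hEF : dist E F = r)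
    (hBL : dist B L = r) (hEL : dist E L = dist F A) :
    dist A L = r / 2 := by
  have hr0 : 0 ≤ r := hr ▸ dist_nonneg
  have hBE : dist B E = 2 * r := by
    have h := dist_left_midpoint (𝕜 := ℝ) B E
    rw [← hE] at h
    rw [hr, dist_comm A B, h]
    norm_num
    ring
  have h1 := midpoint_dist_sq B E F
  rw [← hE] at h1
  have h2 := midpoint_dist_sq B E L
  rw [← hE] at h2
  have hFA : dist F A ^ 2 = 3 / 2 * r ^ 2 := by
    rw [dist_comm F A, h1, hBF, hEF, hBE]; ring
  have h : dist A L ^ 2 = (r / 2) ^ 2 := by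
    rw [h2, hBL, hEL, hFA, hBE]; ring
  calc dist A L = Real.sqrt (dist A L ^ 2) := (Real.sqrt_sq dist_nonneg).symm
    _ = Real.sqrt ((r / 2) ^ 2) := by rw [h]
    _ = r / 2 := Real.sqrt_sq (by linarith)
end

section
/- Let B ≠ C be points of the plane and A a point not on the line through B and C. Let D ≠ A be a point with dist B D = dist B A and dist C D = dist C A. Then the midpoint F of A and D lies on the line through B and C, and the segment AF is perpendicular to BC, i.e. the inner product ⟨D − A, C − B⟩ = 0. In particular F is the foot of the perpendicular dropped from A onto the line BC. -/
open scoped RealInnerProductSpace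

/-- Mohr, *Euclides Danicus*, First Part, Proposition 19: if `D ≠ A` is the reflection
of `A` obtained by compass arcs centered at `B` and `C` (`dist B D = dist B A` and
`dist C D = dist C A`), then the midpoint `F` of `A` and `D` lies on the line `BC` and
`AD` is perpendicular to `BC`; so `F` is the foot of the perpendicular from `A` to
the line `BC`. -/
theorem mohr_prop19_perpendicular_foot (A B C D : EuclideanSpace ℝ (Fin 2))
    (hBC : B ≠ C) (hA : A ∉ affineSpan ℝ ({B, C} : Set (EuclideanSpace ℝ (Fin 2))))
    (hDA : D ≠ A) (hBD : dist B D = dist B A) (hCD : dist C D = dist C A) :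
    midpoint ℝ A D ∈ affineSpan ℝ ({B, C} : Set (EuclideanSpace ℝ (Fin 2))) ∧
      ⟪D - A, C - B⟫ = 0 := by
  set s := AffineSubspace.perpBisector A D with hs
  have hB : B ∈ s := by
    rw [AffineSubspace.mem_perpBisector_iff_dist_eq]
    exact hBD.symm
  have hC : C ∈ s := by
    rw [AffineSubspace.mem_perpBisector_iff_dist_eq]
    exact hCD.symm
  have hMid : midpoint ℝ A D ∈ s := AffineSubspace.midpoint_mem_perpBisector A D
  have hinner : ⟪D - A, C - B⟫ = 0 := by
    have h1 := (AffineSubspace.mem_perpBisector_iff_inner_eq_zero').mp hB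
    have h2 := (AffineSubspace.mem_perpBisector_iff_inner_eq_zero').mp hC
    have : ⟪D -ᵥ A, C -ᵥ B⟫ = 0 := by
      have := sub_eq_zero.mpr (h2.trans h1.symm)
      rw [← inner_sub_right, vsub_sub_vsub_cancel_right] at this
      exact this
    simpa using this
  refine ⟨?_, hinner⟩
  -- the line BC is contained in s; both have dimension 1, hence equal
  have hle : affineSpan ℝ ({B, C} : Set (EuclideanSpace ℝ (Fin 2))) ≤ s := by
    apply affineSpan_le.mpr
    rintro x (rfl | rfl)
    · exact hB
    · exact hC
  have hDA' : D -ᵥ A ≠ 0 := vsub_ne_zero.mpr hDA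
  have hdir_s : Module.finrank ℝ s.direction = 1 := by
    rw [AffineSubspace.direction_perpBisector]
    have h2 : Module.finrank ℝ (EuclideanSpace ℝ (Fin 2)) = 2 := by
      simp [finrank_euclideanSpace]
    have hspan : Module.finrank ℝ (ℝ ∙ (D -ᵥ A)) = 1 := finrank_span_singleton hDA'
    have := Submodule.finrank_add_finrank_orthogonal (K := ℝ ∙ (D -ᵥ A))
    omega
  have hdir_l : Module.finrank ℝ
      (affineSpan ℝ ({B, C} : Set (EuclideanSpace ℝ (Fin 2)))).direction = 1 := by
    rw [direction_affineSpan, vectorSpan_pair]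
    exact finrank_span_singleton (vsub_ne_zero.mpr hBC)
  have hdir : (affineSpan ℝ ({B, C} : Set (EuclideanSpace ℝ (Fin 2)))).direction
      = s.direction := by
    apply Submodule.eq_of_le_of_finrank_eq (AffineSubspace.direction_le hle)
    rw [hdir_s, hdir_l]
  have hBmem : B ∈ affineSpan ℝ ({B, C} : Set (EuclideanSpace ℝ (Fin 2))) :=
    mem_affineSpan ℝ (by simp)
  have : affineSpan ℝ ({B, C} : Set (EuclideanSpace ℝ (Fin 2))) = s :=
    AffineSubspace.ext_of_direction_eq hdir ⟨B, hBmem, hB⟩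
  rw [this]
  exact hMid
end

section
/- Let D ≠ B be points of the plane, F the midpoint of D and B, and C a point strictly between D and B with C ≠ F. Let E be the point such that C is the midpoint of F and E, and let H be a point with dist F H = dist F B and dist E H = dist F B. Then (dist C H)² = (dist D C) · (dist C B). -/
/-- Mohr, *Euclides Danicus*, First Part, Proposition 27: correctness of the
compass-only construction of the geometric mean of the two parts `DC`, `CB` of a
segment `DB`: with `F` the midpoint of `D` and `B`, `C` strictly between `D` and `B`
(`C ≠ F`), `E` the reflection of `F` over `C`, and `H` a point with
`dist F H = dist F B` and `dist E H = dist F B`, one has `CH² = DC · CB`. -/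
theorem mohr_prop27_geometric_mean (D B C E F H : EuclideanSpace ℝ (Fin 2))
    (hDB : D ≠ B) (hF : F = midpoint ℝ D B)
    (hC : Sbtw ℝ D C B) (hCF : C ≠ F)
    (hE : C = midpoint ℝ F E)
    (hFH : dist F H = dist F B) (hEH : dist E H = dist F B) :
    (dist C H) ^ 2 = dist D C * dist C B := by
  obtain ⟨t, ht, hCt⟩ := hC.wbtw
  rw [AffineMap.lineMap_apply] at hCt
  simp only [vsub_eq_sub, vadd_eq_add] at hCt
  have hE' : E = (2:ℝ) • C - F := by
    rw [hE, midpoint_eq_smul_add, invOf_eq_inv]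
    module
  have hHF : H - F = (H - C) + (C - F) := by abel
  have hHE : H - E = (H - C) - (C - F) := by rw [hE']; module
  have hnn : ‖H - F‖ = ‖H - E‖ := by
    rw [← dist_eq_norm, ← dist_eq_norm, dist_comm H F, dist_comm H E, hFH, hEH]
  have horth : inner ℝ (H - C) (C - F) = (0:ℝ) := by
    have h1 := norm_add_sq_real (H - C) (C - F)
    have h2 := norm_sub_sq_real (H - C) (C - F)
    rw [← hHF] at h1
    rw [← hHE] at h2
    have hnn2 : ‖H - F‖ ^ 2 = ‖H - E‖ ^ 2 := by rw [hnn]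
    linarith
  have hpyth : ‖H - F‖ ^ 2 = ‖H - C‖ ^ 2 + ‖C - F‖ ^ 2 := by
    have h1 := norm_add_sq_real (H - C) (C - F)
    rw [← hHF, horth] at h1
    linarith
  have hCH : dist C H ^ 2 = dist F B ^ 2 - ‖C - F‖ ^ 2 := by
    have : dist C H = ‖H - C‖ := by rw [dist_comm, dist_eq_norm]
    rw [this]
    have hFBH : dist F B = ‖H - F‖ := by rw [← hFH, dist_eq_norm, norm_sub_rev]
    rw [hFBH]
    linarith
  -- now coordinates
  have hv : C - F = (1/2 - t) • (D - B) := by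
    rw [← hCt, hF, midpoint_eq_smul_add, invOf_eq_inv]
    module
  have hFB : dist F B = ‖(1/2 : ℝ) • (D - B)‖ := by
    rw [dist_eq_norm, hF, midpoint_eq_smul_add, invOf_eq_inv]
    congr 1
    module
  have hDC : dist D C = ‖t • (D - B)‖ := by
    rw [dist_eq_norm, ← hCt]
    congr 1
    module
  have hCB : dist C B = ‖(1 - t) • (D - B)‖ := by
    rw [dist_eq_norm, ← hCt]
    congr 1
    module
  rw [hCH, hv, hFB, hDC, hCB]
  rw [norm_smul, norm_smul, norm_smul, norm_smul]
  simp only [Real.norm_eq_abs]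
  obtain ⟨ht0, ht1⟩ := Set.mem_Icc.mp ht
  rw [abs_of_nonneg ht0, abs_of_nonneg (by linarith : (0:ℝ) ≤ 1 - t),
    abs_of_nonneg (by norm_num : (0:ℝ) ≤ 1/2)]
  have := sq_abs (1/2 - t)
  nlinarith [norm_nonneg (D - B)]
end

section
/- Let A, B, C be three affinely independent points of the plane. Then the circumradius R of the triangle ABC satisfies R = (dist A B · dist B C) / (2 · d), where d is the distance from B to the line through A and C (d = Metric.infDist B (affineSpan ℝ {A, C})). -/
open EuclideanGeometry Metric Real
open scoped InnerProductSpace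

-- infDist to a subspace equals distance to the orthogonal projection
lemma infDist_eq_dist_orthogonalProjection' {V P : Type*} [NormedAddCommGroup V]
    [InnerProductSpace ℝ V] [MetricSpace P] [NormedAddTorsor V P]
    (s : AffineSubspace ℝ P) [Nonempty s] [s.direction.HasOrthogonalProjection] (p : P) :
    Metric.infDist p s = dist p (EuclideanGeometry.orthogonalProjection s p) := by
  apply le_antisymm
  · exact Metric.infDist_le_dist_of_mem (EuclideanGeometry.orthogonalProjection_mem p)
  · rw [Metric.infDist_eq_iInf]
    refine le_ciInf fun y => ?_
    have := EuclideanGeometry.dist_sq_eq_dist_orthogonalProjection_sq_add_dist_orthogonalProjection_sq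
      (s := s) (p₁ := (y : P)) p y.2
    have h1 : dist p (orthogonalProjection s p) ≤ dist (y : P) p := by
      nlinarith [dist_nonneg (x := (y:P)) (y := p), dist_nonneg (x := p) (y := (orthogonalProjection s p : P)),
        dist_nonneg (x := (y:P)) (y := (orthogonalProjection s p : P))]
    rwa [dist_comm (y : P) p] at h1

-- |sin| of oriented angle equals sin of unoriented angle
lemma sin_angle_eq_abs_sin_oangle {V P : Type*} [NormedAddCommGroup V]
    [InnerProductSpace ℝ V] [MetricSpace P] [NormedAddTorsor V P]
    [Fact (Module.finrank ℝ V = 2)] [Module.Oriented ℝ V (Fin 2)]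
    {p p₁ p₂ : P} (h₁ : p₁ ≠ p) (h₂ : p₂ ≠ p) :
    Real.sin (∠ p₁ p p₂) = |Real.Angle.sin (∡ p₁ p p₂)| := by
  rw [EuclideanGeometry.angle_eq_abs_oangle_toReal h₁ h₂, ← Real.Angle.sin_toReal]
  set x := (∡ p₁ p p₂).toReal with hx
  rcases abs_cases x with ⟨he, h0⟩ | ⟨he, h0⟩
  · rw [he, abs_of_nonneg (Real.sin_nonneg_of_nonneg_of_le_pi h0 (Real.Angle.toReal_le_pi _))]
  · rw [he, Real.sin_neg, abs_of_nonpos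
      (Real.sin_nonpos_of_nonpos_of_neg_pi_le h0.le (Real.Angle.neg_pi_lt_toReal _).le)]

-- the distance from B to line AC is sin(∠ B A C) * dist A B
lemma infDist_line_eq_sin_angle_mul_dist {V P : Type*} [NormedAddCommGroup V]
    [InnerProductSpace ℝ V] [MetricSpace P] [NormedAddTorsor V P] [FiniteDimensional ℝ V]
    (A B C : P) (hCA : C ≠ A) :
    Metric.infDist B (affineSpan ℝ ({A, C} : Set P)) = Real.sin (∠ B A C) * dist A B := by
  set s : AffineSubspace ℝ P := affineSpan ℝ ({A, C} : Set P) with hs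
  have hAs : A ∈ s := left_mem_affineSpan_pair ℝ A C
  have hCs : C ∈ s := right_mem_affineSpan_pair ℝ A C
  haveI : Nonempty s := ⟨⟨A, hAs⟩⟩
  set F : P := (EuclideanGeometry.orthogonalProjection s B : P) with hF
  have hFs : F ∈ s := EuclideanGeometry.orthogonalProjection_mem B
  have hd : Metric.infDist B s = dist B F := infDist_eq_dist_orthogonalProjection' s B
  -- B -ᵥ F is orthogonal to the direction
  have hBF : B -ᵥ F ∈ s.directionᗮ :=
    EuclideanGeometry.vsub_orthogonalProjection_mem_direction_orthogonal s B
  -- F -ᵥ A ∈ direction = ℝ ∙ (C -ᵥ A)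
  have hdir : s.direction = ℝ ∙ (C -ᵥ A) := by
    rw [hs, direction_affineSpan, vectorSpan_pair_rev]
  obtain ⟨t, ht⟩ := Submodule.mem_span_singleton.1
    (hdir ▸ AffineSubspace.vsub_mem_direction hFs hAs)
  rcases eq_or_ne t 0 with rfl | ht0
  · -- F = A : the angle at A is right
    have hFA : F = A := by
      have : F -ᵥ A = 0 := by rw [← ht, zero_smul]
      exact vsub_eq_zero_iff_eq.1 this
    have hinner : ⟪B -ᵥ A, C -ᵥ A⟫_ℝ = 0 := by
      have := hBF
      rw [hFA] at this
      rw [real_inner_comm]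
      exact (Submodule.mem_orthogonal _ _).1 this _ (hdir ▸ Submodule.mem_span_singleton_self _)
    have hangle : ∠ B A C = π / 2 :=
      InnerProductGeometry.inner_eq_zero_iff_angle_eq_pi_div_two _ _ |>.1 hinner
    rw [hd, hFA, hangle, Real.sin_pi_div_two, one_mul, dist_comm]
  · -- generic case: right angle at F
    have hinner : ⟪B -ᵥ F, A -ᵥ F⟫_ℝ = 0 := by
      rw [real_inner_comm]
      exact (Submodule.mem_orthogonal _ _).1 hBF _ (AffineSubspace.vsub_mem_direction hAs hFs)
    have hright : ∠ B F A = π / 2 :=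
      InnerProductGeometry.inner_eq_zero_iff_angle_eq_pi_div_two _ _ |>.1 hinner
    have hsin : Real.sin (∠ F A B) * dist B A = dist B F :=
      EuclideanGeometry.sin_angle_mul_dist_of_angle_eq_pi_div_two hright
    have hFAB : Real.sin (∠ F A B) = Real.sin (∠ B A C) := by
      have h1 : ∠ F A B = InnerProductGeometry.angle (t • (C -ᵥ A)) (B -ᵥ A) := by
        rw [EuclideanGeometry.angle, ← ht]
      rcases ht0.lt_or_gt with htneg | htpos
      · rw [h1, InnerProductGeometry.angle_smul_left_of_neg _ _ htneg,
          InnerProductGeometry.angle_neg_left, Real.sin_pi_sub]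
        rw [EuclideanGeometry.angle_comm B A C, EuclideanGeometry.angle]
      · rw [h1, InnerProductGeometry.angle_smul_left_of_pos _ _ htpos,
          EuclideanGeometry.angle_comm B A C, EuclideanGeometry.angle]
    rw [hd, ← hsin, hFAB, dist_comm B A]


/-- Mohr, *Euclides Danicus*, First Part, Proposition 33: the circumradius `R` of a
triangle `ABC` satisfies `R = (AB · BC) / (2 d)`, where `d` is the distance from `B`
to the line `AC` (the altitude from `B`). -/
theorem mohr_prop33_circumradius (A B C : EuclideanSpace ℝ (Fin 2))
    (h : AffineIndependent ℝ ![A, B, C]) :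
    (⟨![A, B, C], h⟩ : Affine.Simplex ℝ (EuclideanSpace ℝ (Fin 2)) 2).circumradius =
      (dist A B * dist B C) /
        (2 * Metric.infDist B (affineSpan ℝ ({A, C} : Set (EuclideanSpace ℝ (Fin 2))))) := by
  haveI : Fact (Module.finrank ℝ (EuclideanSpace ℝ (Fin 2)) = 2) :=
    ⟨finrank_euclideanSpace_fin⟩
  haveI : Module.Oriented ℝ (EuclideanSpace ℝ (Fin 2)) (Fin 2) :=
    ⟨(EuclideanSpace.basisFun (Fin 2) ℝ).toBasis.orientation⟩
  have hBA : B ≠ A := h.injective.ne (by decide : (1 : Fin 3) ≠ 0)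
  have hCA : C ≠ A := h.injective.ne (by decide : (2 : Fin 3) ≠ 0)
  have hncol : ¬Collinear ℝ ({A, B, C} : Set (EuclideanSpace ℝ (Fin 2))) := by
    rw [← affineIndependent_iff_not_collinear_set]
    exact h
  have hsinpos : 0 < Real.sin (∠ B A C) := by
    apply EuclideanGeometry.sin_pos_of_not_collinear
    intro hc
    apply hncol
    have : ({B, A, C} : Set (EuclideanSpace ℝ (Fin 2))) = {A, B, C} := Set.insert_comm _ _ _
    rwa [this] at hc
  set t : Affine.Triangle ℝ (EuclideanSpace ℝ (Fin 2)) := ⟨![A, B, C], h⟩ with htt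
  have hp0 : t.points 0 = A := rfl
  have hp1 : t.points 1 = B := rfl
  have hp2 : t.points 2 = C := rfl
  have hls := t.dist_div_sin_oangle_div_two_eq_circumradius
    (i₁ := 1) (i₂ := 0) (i₃ := 2) (by decide) (by decide) (by decide)
  rw [hp0, hp1, hp2] at hls
  have habs : |Real.Angle.sin (∡ B A C)| = Real.sin (∠ B A C) :=
    (sin_angle_eq_abs_sin_oangle hBA hCA).symm
  rw [habs] at hls
  have hd : Metric.infDist B (affineSpan ℝ ({A, C} : Set (EuclideanSpace ℝ (Fin 2)))) =
      Real.sin (∠ B A C) * dist A B := infDist_line_eq_sin_angle_mul_dist A B C hCA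
  rw [← hls, hd]
  have hAB0 : dist A B ≠ 0 := dist_ne_zero.2 (Ne.symm hBA)
  field_simp
end

section
/- Let A ≠ C be points of the plane with a = dist A C. Let D be a point with dist C D = a and ⟨D − C, A − C⟩ = 0. Let E be the midpoint of C and D, let F be the point on the ray from E through C with dist E F = dist E A, and let G be the point on the segment from C to A with dist C G = dist C F. Then dist A C · dist A G = (dist G C)², i.e. G divides AC in the golden section (dist G C = ((√5 − 1)/2) · dist A C). -/
open scoped RealInnerProductSpace

/-- Mohr, *Euclides Danicus*, First Part, Proposition 37 (Euclid II.11, the golden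
section): with `CD` perpendicular to `CA` and `dist C D = dist A C = a`, `E` the
midpoint of `C` and `D`, `F` on the ray from `E` through `C` with `dist E F = dist E A`,
and `G` on the segment `CA` with `dist C G = dist C F`, the point `G` divides `AC` so
that the rectangle on the whole `CA` and the part `GA` equals the square on the other
part `GC`; equivalently `GC = ((√5 − 1)/2) · AC`. -/
theorem mohr_prop37_golden_section (A C D E F G : EuclideanSpace ℝ (Fin 2)) (a : ℝ)
    (hAC : A ≠ C) (ha : a = dist A C)
    (hCD : dist C D = a) (hperp : ⟪D - C, A - C⟫ = 0)
    (hE : E = midpoint ℝ C D)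
    (hF : ∃ t : ℝ, 0 ≤ t ∧ F = E + t • (C - E)) (hEF : dist E F = dist E A)
    (hG : G ∈ segment ℝ C A) (hCG : dist C G = dist C F) :
    dist A C * dist A G = (dist G C) ^ 2 ∧
      dist G C = ((Real.sqrt 5 - 1) / 2) * dist A C := by
  have ha0 : 0 < a := ha ▸ dist_pos.2 hAC
  have s5 : Real.sqrt 5 ^ 2 = 5 := Real.sq_sqrt (by norm_num)
  have s5ge : 1 ≤ Real.sqrt 5 := by nlinarith [Real.sqrt_nonneg 5]
  have s5le : Real.sqrt 5 ≤ 3 := by nlinarith [Real.sqrt_nonneg 5]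
  have hu : ‖A - C‖ = a := by rw [← dist_eq_norm]; exact ha.symm
  have hv : ‖D - C‖ = a := by rw [← dist_eq_norm, dist_comm]; exact hCD
  have hperp' : ⟪A - C, D - C⟫ = 0 := by rw [real_inner_comm]; exact hperp
  have hAE : A - E = (A - C) - (1/2 : ℝ) • (D - C) := by
    rw [hE, midpoint_eq_smul_add, invOf_eq_inv]
    module
  have hEA : dist E A = Real.sqrt 5 / 2 * a := by
    have h2 : dist E A ^ 2 = (Real.sqrt 5 / 2 * a) ^ 2 := by
      rw [dist_comm, dist_eq_norm, hAE, norm_sub_sq_real, norm_smul,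
        real_inner_smul_right, hperp', hu, hv, Real.norm_eq_abs,
        abs_of_pos (by norm_num : (0:ℝ) < 1/2)]
      nlinarith [s5]
    have h3 : (0:ℝ) ≤ Real.sqrt 5 / 2 * a := by positivity
    rw [← Real.sqrt_sq dist_nonneg, h2, Real.sqrt_sq h3]
  have hEC : ‖C - E‖ = a / 2 := by
    have hce : C - E = -((1/2 : ℝ) • (D - C)) := by
      rw [hE, midpoint_eq_smul_add, invOf_eq_inv]; module
    rw [hce, norm_neg, norm_smul, Real.norm_eq_abs, hv,
      abs_of_pos (by norm_num : (0:ℝ) < 1/2)]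
    ring
  obtain ⟨t, ht0, hFdef⟩ := hF
  have htval : t = Real.sqrt 5 := by
    have h1 : dist E F = t * (a / 2) := by
      have he : E - (E + t • (C - E)) = -(t • (C - E)) := by module
      rw [hFdef, dist_eq_norm, he, norm_neg, norm_smul, Real.norm_eq_abs, hEC,
        abs_of_nonneg ht0]
    rw [hEF, hEA] at h1
    have h2 : t * a = Real.sqrt 5 * a := by linarith
    exact mul_right_cancel₀ (ne_of_gt ha0) h2
  have hCF : dist C F = (Real.sqrt 5 - 1) / 2 * a := by
    have hFC' : F - C = -((1 - t) • (C - E)) := by rw [hFdef]; module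
    rw [dist_comm, dist_eq_norm, hFC', norm_neg, norm_smul, Real.norm_eq_abs, hEC,
      htval, abs_of_nonpos (by linarith)]
    ring
  obtain ⟨p, q, hp, hq, hpq, hGdef⟩ := hG
  have hGC : G - C = q • (A - C) := by
    rw [← hGdef]
    have hp1 : p = 1 - q := by linarith
    rw [hp1]; module
  have hqv : q = (Real.sqrt 5 - 1) / 2 := by
    have hq1 : dist C G = q * a := by
      rw [dist_comm, dist_eq_norm, hGC, norm_smul, Real.norm_eq_abs, hu,
        abs_of_nonneg hq]
    rw [hq1, hCF] at hCG
    exact mul_right_cancel₀ (ne_of_gt ha0) hCG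
  have hdGC : dist G C = (Real.sqrt 5 - 1) / 2 * a := by
    rw [dist_eq_norm, hGC, norm_smul, Real.norm_eq_abs, hu, abs_of_nonneg hq, hqv]
  have hAG : A - G = (1 - q) • (A - C) := by
    rw [← hGdef]
    have hp1 : p = 1 - q := by linarith
    rw [hp1]; module
  have hdAG : dist A G = (1 - q) * a := by
    rw [dist_eq_norm, hAG, norm_smul, Real.norm_eq_abs, hu,
      abs_of_nonneg (by rw [hqv]; linarith)]
  constructor
  · rw [← ha, hdAG, hdGC, hqv]
    linear_combination (-(a^2)/4) * s5
  · rw [hdGC, ← ha]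
end

section
/- Let A, B, D be points of the plane with dist A B = dist A D > 0, dist B D > 0, and (dist B D)² = (dist A B)² − (dist A B) · (dist B D). Then the isosceles triangle BAD has each base angle equal to twice the apex angle: ∠ A B D = ∠ A D B = 2 · ∠ B A D. -/
open EuclideanGeometry

/-- Mohr, *Euclides Danicus*, First Part, Proposition 38 (Euclid IV.10): an isosceles
triangle `BAD` whose base `BD` equals the greater golden-section part of its legs
(`BD² = AB² − AB·BD`) has each base angle equal to twice the apex angle. -/
theorem mohr_prop38_golden_triangle (A B D : EuclideanSpace ℝ (Fin 2))
    (hiso : dist A B = dist A D) (hpos : 0 < dist A B) (hbase : 0 < dist B D)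
    (hgold : (dist B D) ^ 2 = (dist A B) ^ 2 - dist A B * dist B D) :
    ∠ A B D = ∠ A D B ∧ ∠ A B D = 2 * ∠ B A D := by
  set a := dist A B with ha
  set b := dist B D with hb
  have hsym : ∠ A B D = ∠ A D B := EuclideanGeometry.angle_eq_angle_of_dist_eq hiso
  refine ⟨hsym, ?_⟩
  have ha0 : a ≠ 0 := ne_of_gt hpos
  -- law of cosines at A (apex angle)
  have lawA := EuclideanGeometry.law_cos B A D
  rw [dist_comm B A, dist_comm D A, ← ha, ← hiso, ← hb] at lawA
  have hcosA : Real.cos (∠ B A D) = (a + b) / (2 * a) := by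
    field_simp
    nlinarith [lawA, hgold]
  -- law of cosines at B (base angle)
  have lawB := EuclideanGeometry.law_cos A B D
  rw [dist_comm D B, ← ha, ← hiso, ← hb] at lawB

  have hcosB : Real.cos (∠ A B D) = b / (2 * a) := by
    field_simp
    nlinarith [lawB]
  -- apex angle is acute
  have hAle : ∠ B A D ≤ Real.pi := EuclideanGeometry.angle_le_pi B A D
  have hA0 : 0 ≤ ∠ B A D := EuclideanGeometry.angle_nonneg B A D
  have hcosApos : 0 < Real.cos (∠ B A D) := by
    rw [hcosA]; positivity
  have hAlt : ∠ B A D < Real.pi / 2 := by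
    by_contra h
    push_neg at h
    have := Real.cos_nonpos_of_pi_div_two_le_of_le h (by linarith [Real.pi_pos])
    linarith
  -- cos of double apex equals cos of base
  have hcos2 : Real.cos (∠ A B D) = Real.cos (2 * ∠ B A D) := by
    rw [Real.cos_two_mul, hcosA, hcosB]
    field_simp
    nlinarith [hgold]
  exact Real.injOn_cos ⟨EuclideanGeometry.angle_nonneg A B D,
      EuclideanGeometry.angle_le_pi A B D⟩
    ⟨by linarith, by linarith⟩ hcos2
end

section
/- Let C, A, B be the vertices of an equilateral triangle of side s > 0 in the plane, and let S > 0. Put m = √(s²/4 + S²) − s/2 and v = √(m²/4 + s·m) − m/2 (one has 0 < v < s). Let F = A + (v/s) · (C − A) (so F lies on segment AC with dist A F = v), and let E be the intersection point of the line through B and F with the line through A in direction C − B (the parallel to BC through A). Then dist E F = S. -/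
set_option maxHeartbeats 2000000 in
/-- Mohr, *Euclides Danicus*, Second Part, Proposition 3: given an equilateral
triangle `CAB` of side `s` and a length `S > 0`, setting
`m = √(s²/4 + S²) − s/2` and `v = √(m²/4 + s·m) − m/2`, one has `0 < v < s`; and if
`F` is the point of segment `AC` with `dist A F = v` and `E` is the intersection of
the line `BF` with the parallel to `BC` through `A`, then `dist E F = S`. -/
theorem mohr_II_prop3_neusis (C A B F E : EuclideanSpace ℝ (Fin 2)) (s S : ℝ)
    (hs : 0 < s) (hS : 0 < S)
    (hAB : dist A B = s) (hBC : dist B C = s) (hCA : dist C A = s)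
    (m v : ℝ)
    (hm : m = Real.sqrt (s ^ 2 / 4 + S ^ 2) - s / 2)
    (hv : v = Real.sqrt (m ^ 2 / 4 + s * m) - m / 2)
    (hF : F = A + (v / s) • (C - A))
    (hE₁ : E ∈ affineSpan ℝ ({B, F} : Set (EuclideanSpace ℝ (Fin 2))))
    (hE₂ : E ∈ AffineSubspace.mk' A (Submodule.span ℝ {C - B})) :
    0 < v ∧ v < s ∧ dist E F = S := by
  -- algebraic preliminaries
  have hm0 : 0 < m := by
    rw [hm]
    have h1 : s / 2 < Real.sqrt (s ^ 2 / 4 + S ^ 2) := by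
      have : s / 2 = Real.sqrt (s ^ 2 / 4) := by
        rw [show s ^ 2 / 4 = (s / 2) ^ 2 by ring, Real.sqrt_sq (by linarith)]
      rw [this]
      apply Real.sqrt_lt_sqrt (by positivity)
      nlinarith
    linarith
  have hmS : m ^ 2 + s * m = S ^ 2 := by
    have h1 : m + s / 2 = Real.sqrt (s ^ 2 / 4 + S ^ 2) := by rw [hm]; ring
    have h2 : (m + s / 2) ^ 2 = s ^ 2 / 4 + S ^ 2 := by
      rw [h1, Real.sq_sqrt (by positivity)]
    nlinarith
  have hv0 : 0 < v := by
    rw [hv]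
    have h1 : m / 2 < Real.sqrt (m ^ 2 / 4 + s * m) := by
      have : m / 2 = Real.sqrt (m ^ 2 / 4) := by
        rw [show m ^ 2 / 4 = (m / 2) ^ 2 by ring, Real.sqrt_sq (by linarith)]
      rw [this]
      apply Real.sqrt_lt_sqrt (by positivity)
      nlinarith
    linarith
  have hvm : v ^ 2 + m * v = s * m := by
    have h1 : v + m / 2 = Real.sqrt (m ^ 2 / 4 + s * m) := by rw [hv]; ring
    have h2 : (v + m / 2) ^ 2 = m ^ 2 / 4 + s * m := by
      rw [h1, Real.sq_sqrt (by positivity)]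
    nlinarith
  have hmv : m * (s - v) = v ^ 2 := by nlinarith
  have hvs : v < s := by nlinarith
  refine ⟨hv0, hvs, ?_⟩
  -- geometric setup
  set a : EuclideanSpace ℝ (Fin 2) := A - B with ha
  set c : EuclideanSpace ℝ (Fin 2) := C - B with hc
  have hna : ‖a‖ = s := by rw [ha, ← dist_eq_norm]; exact hAB
  have hnc : ‖c‖ = s := by rw [hc, ← dist_eq_norm, dist_comm]; exact hBC
  have haa : (inner ℝ a a : ℝ) = s ^ 2 := by rw [real_inner_self_eq_norm_sq, hna]
  have hcc : (inner ℝ c c : ℝ) = s ^ 2 := by rw [real_inner_self_eq_norm_sq, hnc]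
  have hac : (inner ℝ a c : ℝ) = s ^ 2 / 2 := by
    have h1 : ‖c - a‖ = s := by
      have : c - a = C - A := by rw [ha, hc]; abel
      rw [this, ← dist_eq_norm]; exact hCA
    have h2 : ‖c - a‖ ^ 2 = ‖c‖ ^ 2 - 2 * inner ℝ c a + ‖a‖ ^ 2 := norm_sub_sq_real c a
    have h3 : (inner ℝ c a : ℝ) = inner ℝ a c := real_inner_comm a c
    rw [h1, hna, hnc, h3] at h2
    linarith
  have hca : (inner ℝ c a : ℝ) = s ^ 2 / 2 := by rw [real_inner_comm]; exact hac
  -- extract parameters from memberships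
  obtain ⟨u, hu⟩ : ∃ u : ℝ, u • (F - B) = E - B := by
    have hB : B ∈ affineSpan ℝ ({B, F} : Set (EuclideanSpace ℝ (Fin 2))) :=
      left_mem_affineSpan_pair ℝ B F
    have hd := AffineSubspace.vsub_mem_direction hE₁ hB
    rw [direction_affineSpan] at hd
    obtain ⟨u, hu⟩ := mem_vectorSpan_pair_rev.mp hd
    exact ⟨u, by simpa using hu⟩
  obtain ⟨t, ht⟩ : ∃ t : ℝ, E - A = t • c := by
    have := AffineSubspace.mem_mk'.mp hE₂
    rw [Submodule.mem_span_singleton] at this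
    obtain ⟨t, ht⟩ := this
    exact ⟨t, by rw [hc]; simpa using ht.symm⟩
  -- the key linear relation
  have hFB : F - B = (1 - v / s) • a + (v / s) • c := by
    rw [hF, ha, hc]
    module
  have key : (u * (1 - v / s) - 1) • a + (u * (v / s) - t) • c = 0 := by
    have h1 : u • (F - B) = a + t • c := by
      rw [hu]
      have : E - B = (E - A) + a := by rw [ha]; abel
      rw [this, ht]
      abel
    rw [hFB] at h1
    have h2 : u • ((1 - v / s) • a + (v / s) • c) - (a + t • c) = 0 := by
      rw [h1]; abel
    calc (u * (1 - v / s) - 1) • a + (u * (v / s) - t) • c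
        = u • ((1 - v / s) • a + (v / s) • c) - (a + t • c) := by module
      _ = 0 := h2
  set x : ℝ := u * (1 - v / s) - 1 with hx
  set y : ℝ := u * (v / s) - t with hy
  have hs2 : (0:ℝ) < s ^ 2 := by positivity
  have e1 : x * s ^ 2 + y * (s ^ 2 / 2) = 0 := by
    have h := congrArg (fun w => (inner ℝ w a : ℝ)) key
    simp only [inner_add_left, real_inner_smul_left, inner_zero_left] at h
    rw [haa, hca] at h
    exact h
  have e2 : x * (s ^ 2 / 2) + y * s ^ 2 = 0 := by
    have h := congrArg (fun w => (inner ℝ w c : ℝ)) key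
    simp only [inner_add_left, real_inner_smul_left, inner_zero_left] at h
    rw [hac, hcc] at h
    exact h
  have hs2' : s ^ 2 ≠ 0 := ne_of_gt hs2
  have hx0 : x = 0 := by
    have hxs : x * s ^ 2 = 0 := by linear_combination (4/3) * e1 - (2/3) * e2
    rcases mul_eq_zero.mp hxs with h | h
    · exact h
    · exact absurd h hs2'
  have hy0 : y = 0 := by
    have hys : y * s ^ 2 = 0 := by linear_combination (4/3) * e2 - (2/3) * e1
    rcases mul_eq_zero.mp hys with h | h
    · exact h
    · exact absurd h hs2'
  -- so u * (s - v) = s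
  have hus : u * (s - v) = s := by
    have : u * (1 - v / s) = 1 := by rw [hx] at hx0; linarith
    field_simp at this
    linarith
  -- compute E - F
  have hEF : E - F = (u - 1) • (F - B) := by
    have : E - F = (E - B) - (F - B) := by abel
    rw [this, ← hu]
    module
  have hnormFB : ‖F - B‖ ^ 2 = s ^ 2 - s * v + v ^ 2 := by
    rw [← real_inner_self_eq_norm_sq, hFB]
    have hexp : (inner ℝ ((1 - v / s) • a + (v / s) • c) ((1 - v / s) • a + (v / s) • c) : ℝ)
        = (1 - v / s) ^ 2 * s ^ 2 + 2 * ((1 - v / s) * (v / s)) * (s ^ 2 / 2)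
          + (v / s) ^ 2 * s ^ 2 := by
      simp only [inner_add_left, inner_add_right, real_inner_smul_left, real_inner_smul_right]
      rw [haa, hcc, hac, hca]
      ring
    rw [hexp]
    field_simp
    ring
  have hdist2 : dist E F ^ 2 = (u - 1) ^ 2 * (s ^ 2 - s * v + v ^ 2) := by
    rw [dist_eq_norm, hEF, norm_smul, mul_pow, hnormFB, Real.norm_eq_abs, sq_abs]
  have hfinal : dist E F ^ 2 = S ^ 2 := by
    rw [hdist2]
    have h1 : (u - 1) * (s - v) = v := by linear_combination hus
    have hsv : (0:ℝ) < (s - v) ^ 2 := pow_pos (sub_pos.mpr hvs) 2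
    have h2 : S ^ 2 * (s - v) ^ 2 = v ^ 2 * (s ^ 2 - s * v + v ^ 2) := by
      linear_combination (-(s - v) ^ 2) * hmS + ((s + m) * (s - v) + v ^ 2) * hmv
    have h3 : (u - 1) ^ 2 * (s ^ 2 - s * v + v ^ 2) * (s - v) ^ 2
        = S ^ 2 * (s - v) ^ 2 := by
      linear_combination ((s ^ 2 - s * v + v ^ 2) * ((u - 1) * (s - v) + v)) * h1 - h2
    have := mul_right_cancel₀ (ne_of_gt hsv) h3
    linarith
  have h1 : dist E F = Real.sqrt (S ^ 2) := by
    rw [← hfinal, Real.sqrt_sq dist_nonneg]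
  rw [h1, Real.sqrt_sq hS.le]
end

section
/- Let A, B, C, D be the vertices of a square of side s > 0, with B = A + s·u, C = B + s·w, D = A + s·w for orthonormal vectors u, w. Let R > 0, put f = √(s² + R²) − s and x = √(f²/4 + s·f) − f/2 (one has 0 < x < s). Let K = D + x·u (a point of segment DC), and let I be the intersection point of the line through B and K with the line through A and D. Then dist K I = R. -/
set_option maxHeartbeats 1000000


open scoped RealInnerProductSpace

/-- Mohr, *Euclides Danicus*, Second Part, Proposition 4: given a square `ABCD` of
side `s` and a length `R > 0`, setting `f = √(s² + R²) − s` and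
`x = √(f²/4 + s·f) − f/2`, one has `0 < x < s`; and if `K` is the point of segment
`DC` with `dist D K = x` and `I` is the intersection of the line `BK` with the line
`AD`, then `dist K I = R`. -/
theorem mohr_II_prop4_neusis (A B C D K I : EuclideanSpace ℝ (Fin 2))
    (u w : EuclideanSpace ℝ (Fin 2)) (s R : ℝ)
    (hu : ‖u‖ = 1) (hw : ‖w‖ = 1) (huw : ⟪u, w⟫ = 0)
    (hs : 0 < s) (hR : 0 < R)
    (hB : B = A + s • u) (hC : C = B + s • w) (hD : D = A + s • w)
    (f x : ℝ)
    (hf : f = Real.sqrt (s ^ 2 + R ^ 2) - s)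
    (hx : x = Real.sqrt (f ^ 2 / 4 + s * f) - f / 2)
    (hK : K = D + x • u)
    (hI₁ : I ∈ affineSpan ℝ ({B, K} : Set (EuclideanSpace ℝ (Fin 2))))
    (hI₂ : I ∈ affineSpan ℝ ({A, D} : Set (EuclideanSpace ℝ (Fin 2)))) :
    0 < x ∧ x < s ∧ dist K I = R := by
  have hf0 : 0 < f := by
    rw [hf]
    have h1 : s < Real.sqrt (s ^ 2 + R ^ 2) :=
      (Real.lt_sqrt hs.le).mpr (by nlinarith)
    linarith
  have hfs : (f + s) ^ 2 = s ^ 2 + R ^ 2 := by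
    rw [hf, sub_add_cancel]
    exact Real.sq_sqrt (by positivity)
  have hR2 : f ^ 2 + 2 * s * f = R ^ 2 := by nlinarith
  have hx0 : 0 < x := by
    rw [hx]
    have h1 : f / 2 < Real.sqrt (f ^ 2 / 4 + s * f) :=
      (Real.lt_sqrt (by linarith)).mpr (by nlinarith)
    linarith
  have hxf : (x + f / 2) ^ 2 = f ^ 2 / 4 + s * f := by
    rw [hx, sub_add_cancel]
    exact Real.sq_sqrt (by nlinarith)
  have hx2 : x ^ 2 = f * (s - x) := by nlinarith
  have hxs : x < s := by nlinarith [mul_pos hx0 hx0]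
  have hsx : s - x ≠ 0 := by linarith
  refine ⟨hx0, hxs, ?_⟩
  -- extract line parameters
  obtain ⟨t, ht⟩ := vadd_left_mem_affineSpan_pair.mp
    (show (I -ᵥ B) +ᵥ B ∈ affineSpan ℝ ({B, K} : Set (EuclideanSpace ℝ (Fin 2))) by
      rwa [vsub_vadd])
  obtain ⟨r, hr⟩ := vadd_left_mem_affineSpan_pair.mp
    (show (I -ᵥ A) +ᵥ A ∈ affineSpan ℝ ({A, D} : Set (EuclideanSpace ℝ (Fin 2))) by
      rwa [vsub_vadd])
  simp only [vsub_eq_sub] at ht hr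
  have heq : (t * (x - s) + s) • u + ((t - r) * s) • w = (0 : EuclideanSpace ℝ (Fin 2)) := by
    have h : t • (K - B) + B = r • (D - A) + A := by
      rw [ht, hr]; abel
    rw [hK, hD, hB] at h
    linear_combination (norm := module) h
  have h1 : t * (x - s) + s = 0 := by
    have h := congrArg (fun v => ⟪u, v⟫) heq
    simpa only [inner_add_right, real_inner_smul_right, real_inner_self_eq_norm_sq, hu, huw,
      inner_zero_right, mul_zero, add_zero, mul_one, one_pow] using h
  have h2 : (1 - t) * (s - x) = -x := by linear_combination h1
  have hKI : K - I = (1 - t) • ((x - s) • u + s • w) := by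
    have hI : I = t • (K - B) + B := by rw [ht]; abel
    rw [hI, hK, hD, hB]
    module
  have hv : ‖(x - s) • u + s • w‖ ^ 2 = (x - s) ^ 2 + s ^ 2 := by
    rw [norm_add_sq_real, norm_smul, norm_smul, hu, hw, real_inner_smul_left,
      real_inner_smul_right, huw]
    simp [sq_abs]
  have hnorm : dist K I ^ 2 = (1 - t) ^ 2 * ((x - s) ^ 2 + s ^ 2) := by
    rw [dist_eq_norm, hKI, norm_smul, mul_pow, Real.norm_eq_abs, sq_abs, hv]
  have key : x ^ 2 * ((x - s) ^ 2 + s ^ 2) = R ^ 2 * (s - x) ^ 2 := by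
    linear_combination (f * (s - x) + (x - s) ^ 2 + s ^ 2) * hx2 + (s - x) ^ 2 * hR2
  have h2sq : (1 - t) ^ 2 * (s - x) ^ 2 = x ^ 2 := by
    linear_combination ((1 - t) * (s - x) - x) * h2
  have hfin : dist K I ^ 2 * (s - x) ^ 2 = R ^ 2 * (s - x) ^ 2 := by
    rw [hnorm]
    linear_combination ((x - s) ^ 2 + s ^ 2) * h2sq + key
  have hd2 : dist K I ^ 2 = R ^ 2 :=
    mul_right_cancel₀ (pow_ne_zero 2 hsx) hfin
  nlinarith [dist_nonneg (x := K) (y := I), hd2, hR]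
end

section
/- Let A ≠ E be points of the plane, e = dist A E, and let i > 0. Let O be the point on segment AE with dist A O = √(i²/4 + e·i) − i/2; this value lies strictly between 0 and e, and O satisfies (dist A O)² = (dist O E) · i. -/
/-- Mohr, *Euclides Danicus*, Second Part, Proposition 5: given `A ≠ E` with
`e = dist A E` and a length `i > 0`, the value `√(i²/4 + e·i) − i/2` lies strictly
between `0` and `e`, and the point `O` of the segment `AE` at this distance from `A`
satisfies `AO² = OE · i` (the square on `AO` equals the rectangle contained by `OE`
and the given length `i`). -/
theorem mohr_II_prop5 (A E O : EuclideanSpace ℝ (Fin 2)) (e i : ℝ)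
    (hAE : A ≠ E) (he : e = dist A E) (hi : 0 < i)
    (hO : O ∈ segment ℝ A E)
    (hAO : dist A O = Real.sqrt (i ^ 2 / 4 + e * i) - i / 2) :
    Real.sqrt (i ^ 2 / 4 + e * i) - i / 2 ∈ Set.Ioo 0 e ∧
      (dist A O) ^ 2 = dist O E * i := by
  have hepos : 0 < e := he ▸ dist_pos.2 hAE
  set s := Real.sqrt (i ^ 2 / 4 + e * i) with hs
  have hnn : 0 ≤ i ^ 2 / 4 + e * i := by positivity
  have hsq : s ^ 2 = i ^ 2 / 4 + e * i := Real.sq_sqrt hnn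
  have hslb : i / 2 < s := by
    have : (i / 2) ^ 2 < s ^ 2 := by rw [hsq]; nlinarith
    nlinarith [Real.sqrt_nonneg (i ^ 2 / 4 + e * i)]
  have hsub : s < e + i / 2 := by
    have h1 : s ^ 2 < (e + i / 2) ^ 2 := by rw [hsq]; nlinarith
    nlinarith [Real.sqrt_nonneg (i ^ 2 / 4 + e * i)]
  have hsum : dist A O + dist O E = e := by
    rw [he]; exact dist_add_dist_of_mem_segment hO
  refine ⟨⟨by linarith, by linarith⟩, ?_⟩
  have hOE : dist O E = e - (s - i / 2) := by rw [← hsum, hAO]; ring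
  rw [hAO, hOE]; nlinarith
end

section
/- Let A ≠ B be points of the plane, G the midpoint of A and B, and r = (dist A B)/2. Let C be a point with dist G C = r and dist C A = dist C B. Let E be a point strictly between A and B, and let D ≠ C be a point with dist G D = r lying on the line through C and E. Then dist A D · dist E B = dist D B · dist A E (i.e. AD : DB = AE : EB). -/
open RealInnerProductSpace

set_option maxHeartbeats 1000000 in
/-- Mohr, *Euclides Danicus*, Second Part, Proposition 6: `C` and `D` lie on the
circle with diameter `AB` (center `G`, radius `r = AB/2`), with `C` the midpoint of
one of the semicircular arcs (`dist C A = dist C B`); if `E` lies strictly between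
`A` and `B` and `D ≠ C` is on the line `CE`, then the line from `D` through `E`
divides `AB` in the ratio `AD : DB`, i.e. `AD · EB = DB · AE`. -/
theorem mohr_II_prop6 (A B G C D E : EuclideanSpace ℝ (Fin 2)) (r : ℝ)
    (hAB : A ≠ B) (hG : G = midpoint ℝ A B) (hr : r = dist A B / 2)
    (hGC : dist G C = r) (hCiso : dist C A = dist C B)
    (hE : Sbtw ℝ A E B)
    (hDC : D ≠ C) (hGD : dist G D = r)
    (hDline : D ∈ affineSpan ℝ ({C, E} : Set (EuclideanSpace ℝ (Fin 2)))) :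
    dist A D * dist E B = dist D B * dist A E := by
  have hr0 : 0 < r := by rw [hr]; have := dist_pos.mpr hAB; linarith
  obtain ⟨u, hu⟩ : ∃ u : EuclideanSpace ℝ (Fin 2), u = B - A := ⟨_, rfl⟩
  obtain ⟨c, hc⟩ : ∃ c : EuclideanSpace ℝ (Fin 2), c = C - G := ⟨_, rfl⟩
  have hG2 : G = (2 : ℝ)⁻¹ • (A + B) := by rw [hG, midpoint_eq_smul_add, invOf_eq_inv]
  have hGA : G - A = (1/2 : ℝ) • u := by rw [hG2, hu]; module
  have hBG : B - G = (1/2 : ℝ) • u := by rw [hG2, hu]; module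
  have hnu : ‖u‖ = 2 * r := by rw [hu, ← dist_eq_norm, dist_comm, hr]; ring
  have hnc : ‖c‖ = r := by rw [hc, ← dist_eq_norm, dist_comm]; exact hGC
  -- c ⟂ u
  have hcu : ⟪c, u⟫ = 0 := by
    have h1 : C - A = c + (1/2 : ℝ) • u := by
      have h : C - A = (C - G) + (G - A) := by abel
      rw [h, hGA, ← hc]
    have h2 : C - B = c - (1/2 : ℝ) • u := by
      have h : C - B = (C - G) - (B - G) := by abel
      rw [h, hBG, ← hc]
    have h : ‖C - A‖ = ‖C - B‖ := by rw [← dist_eq_norm, ← dist_eq_norm]; exact hCiso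
    have h' : ‖c + (1/2 : ℝ) • u‖ ^ 2 = ‖c - (1/2 : ℝ) • u‖ ^ 2 := by rw [← h1, ← h2, h]
    rw [norm_add_sq_real, norm_sub_sq_real, real_inner_smul_right] at h'
    linarith
  -- key norm formula
  have key : ∀ α β : ℝ, ‖α • c + β • u‖ ^ 2 = α ^ 2 * r ^ 2 + 4 * β ^ 2 * r ^ 2 := by
    intro α β
    rw [norm_add_sq_real, norm_smul, norm_smul, real_inner_smul_left, real_inner_smul_right,
      hcu, hnc, hnu, Real.norm_eq_abs, Real.norm_eq_abs, mul_pow, mul_pow, sq_abs, sq_abs]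
    ring
  -- parametrize E
  obtain ⟨⟨t0, ht0, hElm⟩, -⟩ := sbtw_iff_mem_image_Ioo_and_ne.mp hE
  obtain ⟨τ, hτ⟩ : ∃ τ : ℝ, τ = t0 - 1/2 := ⟨_, rfl⟩
  have hτ1 : -(1/2 : ℝ) < τ := by rw [hτ]; linarith [ht0.1]
  have hτ2 : τ < 1/2 := by rw [hτ]; linarith [ht0.2]
  have hEG : E - G = τ • u := by
    rw [← hElm, AffineMap.lineMap_apply]
    simp only [vsub_eq_sub, vadd_eq_add]
    rw [hG2, hu, hτ]; module
  -- parametrize D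
  have hD' : (D - C) +ᵥ C ∈ line[ℝ, C, E] := by
    simpa [vadd_eq_add, sub_add_cancel] using hDline
  obtain ⟨s, hs⟩ := vadd_left_mem_affineSpan_pair.mp hD'
  simp only [vsub_eq_sub] at hs
  have hDG : D - G = (1 - s) • c + (s * τ) • u := by
    have h1 : D - G = (D - C) + (C - G) := by abel
    have h2 : E - C = τ • u - c := by
      have h : E - C = (E - G) - (C - G) := by abel
      rw [h, hEG, ← hc]
    rw [h1, ← hs, h2, ← hc]; module
  -- circle condition for D
  have hcirc : (1 - s) ^ 2 * r ^ 2 + 4 * (s * τ) ^ 2 * r ^ 2 = r ^ 2 := by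
    have h : ‖D - G‖ = r := by rw [← dist_eq_norm, dist_comm]; exact hGD
    have h' : ‖D - G‖ ^ 2 = r ^ 2 := by rw [h]
    rw [hDG, key] at h'
    exact h'
  have hrne : r ≠ 0 := ne_of_gt hr0
  have hcirc' : (1 - s) ^ 2 + 4 * s ^ 2 * τ ^ 2 - 1 = 0 := by
    have h' : ((1 - s) ^ 2 + 4 * s ^ 2 * τ ^ 2 - 1) * r ^ 2 = 0 := by
      linear_combination hcirc
    exact (mul_eq_zero.mp h').resolve_right (pow_ne_zero 2 hrne)
  have hsne : s ≠ 0 := by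
    intro h0
    apply hDC
    have h : D - C = 0 := by rw [← hs, h0, zero_smul]
    exact sub_eq_zero.mp h
  have hskey : s * (1 + 4 * τ ^ 2) = 2 := by
    have h6 : s * ((1 + 4 * τ ^ 2) * s - 2) = 0 := by linear_combination hcirc'
    have h7 := (mul_eq_zero.mp h6).resolve_left hsne
    nlinarith [h7]
  -- distances
  have hAD2 : dist A D ^ 2 = 2 * r ^ 2 * (1 + 2 * s * τ) := by
    have hDA : D - A = (1 - s) • c + (s * τ + 1/2) • u := by
      have h1 : D - A = (D - G) + (G - A) := by abel
      rw [h1, hDG, hGA]; module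
    rw [dist_eq_norm, norm_sub_rev, hDA, key]
    linear_combination r ^ 2 * hcirc'
  have hDB2 : dist D B ^ 2 = 2 * r ^ 2 * (1 - 2 * s * τ) := by
    have hDB : D - B = (1 - s) • c + (s * τ - 1/2) • u := by
      have h1 : D - B = (D - G) - (B - G) := by abel
      rw [h1, hDG, hBG]; module
    rw [dist_eq_norm, hDB, key]
    linear_combination r ^ 2 * hcirc'
  have hAE : dist A E = (1 + 2 * τ) * r := by
    have hEA : E - A = (τ + 1/2) • u := by
      have h1 : E - A = (E - G) + (G - A) := by abel
      rw [h1, hEG, hGA]; module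
    rw [dist_eq_norm, norm_sub_rev, hEA, norm_smul, Real.norm_eq_abs, hnu,
      abs_of_pos (by linarith)]
    ring
  have hEB : dist E B = (1 - 2 * τ) * r := by
    have hBE : B - E = (1/2 - τ) • u := by
      have h1 : B - E = (B - G) - (E - G) := by abel
      rw [h1, hEG, hBG]; module
    rw [dist_eq_norm, norm_sub_rev, hBE, norm_smul, Real.norm_eq_abs, hnu,
      abs_of_pos (by linarith)]
    ring
  have hsq : (dist A D * dist E B) ^ 2 = (dist D B * dist A E) ^ 2 := by
    rw [mul_pow, mul_pow, hAD2, hDB2, hAE, hEB]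
    linear_combination (8 * τ * r ^ 4) * hskey
  have h1 : 0 ≤ dist A D * dist E B := by positivity
  have h2 : 0 ≤ dist D B * dist A E := by positivity
  exact (sq_eq_sq₀ h1 h2).mp hsq
end

section
/- Let B ≠ D be points of the plane, r₁ > r₂ > 0, and let F = B + (r₁/(r₁ − r₂)) · (D − B) (the external center of similitude of the circles of center B radius r₁ and center D radius r₂). Let L be any line of the plane passing through F whose distance from B equals r₁ (i.e. L is tangent to the first circle). Then the distance from D to L equals r₂ (L is tangent to the second circle). -/
open Pointwise

/-- Mohr, *Euclides Danicus*, Second Part, Proposition 7: the point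
`F = B + (r₁/(r₁ − r₂)) • (D − B)` (the external center of similitude of the circle
of center `B` and radius `r₁` and the circle of center `D` and radius `r₂`) has the
property that every line through `F` tangent to the first circle is also tangent to
the second circle. -/
theorem mohr_II_prop7_common_tangent (B D F : EuclideanSpace ℝ (Fin 2)) (r₁ r₂ : ℝ)
    (hBD : B ≠ D) (hr₂ : 0 < r₂) (hr : r₂ < r₁)
    (hF : F = B + (r₁ / (r₁ - r₂)) • (D - B))
    (L : AffineSubspace ℝ (EuclideanSpace ℝ (Fin 2)))
    (hL : Module.finrank ℝ L.direction = 1)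
    (hFL : F ∈ L)
    (htangent : Metric.infDist B (L : Set (EuclideanSpace ℝ (Fin 2))) = r₁) :
    Metric.infDist D (L : Set (EuclideanSpace ℝ (Fin 2))) = r₂ := by
  have hr₁ : (0:ℝ) < r₁ := hr₂.trans hr
  set t : ℝ := r₂ / r₁ with ht
  have htpos : 0 < t := div_pos hr₂ hr₁
  have hsub : r₁ - r₂ ≠ 0 := by linarith
  subst hF
  set c : ℝ := r₁ / (r₁ - r₂) with hc
  set F := B + c • (D - B) with hF
  have hDF : D - F = t • (B - F) := by
    have h1 : D - F = (1 - c) • (D - B) := by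
      rw [hF, sub_smul, one_smul]; abel
    have h2 : B - F = (-c) • (D - B) := by
      rw [hF, neg_smul]; abel
    rw [h1, h2, smul_smul]
    congr 1
    rw [hc, ht]
    field_simp
    ring
  -- translated set
  set S : Set (EuclideanSpace ℝ (Fin 2)) := (L.direction : Set (EuclideanSpace ℝ (Fin 2))) with hS
  have hcoe : (L : Set (EuclideanSpace ℝ (Fin 2))) = (· + F) '' S := by
    rw [hS, AffineSubspace.coe_direction_eq_vsub_set_right hFL, Set.image_image]
    simp only [vsub_eq_sub, sub_add_cancel, Set.image_id']
  have hiso : Isometry (fun x : EuclideanSpace ℝ (Fin 2) => x + F) :=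
    Isometry.of_dist_eq (fun a b => by simp [dist_eq_norm])
  have hkey : ∀ x : EuclideanSpace ℝ (Fin 2),
      Metric.infDist (x + F) (L : Set (EuclideanSpace ℝ (Fin 2))) = Metric.infDist x S := by
    intro x
    rw [hcoe, Metric.infDist_image hiso]
  -- scaling invariance of S
  have hsmul : t • S = S := by
    ext x
    rw [Set.mem_smul_set_iff_inv_smul_mem₀ (ne_of_gt htpos)]
    exact ⟨fun h => by simpa [hS, smul_smul, mul_inv_cancel₀ (ne_of_gt htpos)] using
        L.direction.smul_mem t h,
      fun h => L.direction.smul_mem t⁻¹ h⟩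
  have hB : Metric.infDist (B - F) S = r₁ := by
    have := hkey (B - F)
    rw [sub_add_cancel] at this
    rw [← this]; exact htangent
  have hD : Metric.infDist D (L : Set (EuclideanSpace ℝ (Fin 2))) =
      Metric.infDist (D - F) S := by
    have := hkey (D - F)
    rwa [sub_add_cancel] at this
  rw [hD, hDF, ← hsmul, infDist_smul₀ (ne_of_gt htpos), hB]
  rw [Real.norm_eq_abs, abs_of_pos htpos, ht]
  field_simp
end

section
/- Archimedes' twin-circle property (Mohr's arbelos proposition): let r₁, r₂ > 0, R = r₁ + r₂, ρ = r₁·r₂/R, and let u, v be orthonormal vectors of the plane. Fix A and set D = A + 2r₁·u, F = A + r₁·u (center of the semicircle on AD), B = A + R·u (center of the semicircle on AC, where C = A + 2R·u). Then the point E = A + (r₁(R + r₁)/R)·u + ((r₁/R)·√((R + r₂)² − r₁²))·v satisfies: dist E F = r₁ + ρ, dist E B = R − ρ, and |⟨E − D, u⟩| = ρ. Hence the circle of center E and radius ρ is internally tangent to the circle of center B radius R, externally tangent to the circle of center F radius r₁, and tangent to the line through D perpendicular to AC. -/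
open scoped RealInnerProductSpace

lemma norm_comb_sq (u v : EuclideanSpace ℝ (Fin 2))
    (hu : ‖u‖ = 1) (hv : ‖v‖ = 1) (huv : ⟪u, v⟫ = 0) (a b : ℝ) :
    ‖a • u + b • v‖ ^ 2 = a ^ 2 + b ^ 2 := by
  rw [norm_add_sq_real, norm_smul, norm_smul, real_inner_smul_left,
    real_inner_smul_right, huv, hu, hv]
  simp [mul_pow, sq_abs]

set_option maxHeartbeats 1000000 in
/-- Mohr, *Euclides Danicus*, Second Part, Proposition 9 (Archimedes' twin circles in
the arbelos): with `r₁, r₂ > 0`, `R = r₁ + r₂`, `ρ = r₁·r₂/R`, orthonormal `u, v`,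
`D = A + 2r₁·u`, `F = A + r₁·u`, `B = A + R·u`, the point
`E = A + (r₁(R + r₁)/R)·u + ((r₁/R)·√((R + r₂)² − r₁²))·v` satisfies
`dist E F = r₁ + ρ`, `dist E B = R - ρ` and `|⟪E − D, u⟫| = ρ`: the circle of center
`E` and radius `ρ` is internally tangent to the circle of center `B` and radius `R`,
externally tangent to the circle of center `F` and radius `r₁`, and tangent to the
perpendicular to `AC` through `D`. -/
theorem mohr_II_prop9_twin_circle (A D F B E u v : EuclideanSpace ℝ (Fin 2))
    (r₁ r₂ R ρ : ℝ) (hr₁ : 0 < r₁) (hr₂ : 0 < r₂)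
    (hR : R = r₁ + r₂) (hρ : ρ = r₁ * r₂ / R)
    (hu : ‖u‖ = 1) (hv : ‖v‖ = 1) (huv : ⟪u, v⟫ = 0)
    (hD : D = A + (2 * r₁) • u)
    (hF : F = A + r₁ • u)
    (hB : B = A + R • u)
    (hE : E = A + (r₁ * (R + r₁) / R) • u
        + ((r₁ / R) * Real.sqrt ((R + r₂) ^ 2 - r₁ ^ 2)) • v) :
    dist E F = r₁ + ρ ∧ dist E B = R - ρ ∧ |⟪E - D, u⟫| = ρ := by
  have hRpos : 0 < R := by rw [hR]; linarith
  have hs2 : (Real.sqrt ((R + r₂) ^ 2 - r₁ ^ 2)) ^ 2 = (R + r₂) ^ 2 - r₁ ^ 2 := by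
    rw [Real.sq_sqrt]; nlinarith
  set s := Real.sqrt ((R + r₂) ^ 2 - r₁ ^ 2) with hs
  have hρpos : 0 < ρ := by rw [hρ]; positivity
  have key : ∀ (P : EuclideanSpace ℝ (Fin 2)) (c t : ℝ),
      P = A + c • u → 0 ≤ t → (r₁ * (R + r₁) / R - c) ^ 2 + ((r₁ / R) * s) ^ 2 = t ^ 2 →
      dist E P = t := by
    intro P c t hP ht hsq
    have hEP : E - P = (r₁ * (R + r₁) / R - c) • u + ((r₁ / R) * s) • v := by
      rw [hE, hP, sub_smul]; module
    rw [dist_eq_norm]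
    have h1 : ‖E - P‖ ^ 2 = t ^ 2 := by
      rw [hEP, norm_comb_sq u v hu hv huv, hsq]
    have := norm_nonneg (E - P)
    nlinarith
  refine ⟨key F r₁ (r₁ + ρ) hF (by linarith) ?_, key B R (R - ρ) hB ?_ ?_, ?_⟩
  · rw [hρ]; field_simp; nlinarith [hs2]
  · rw [hρ, sub_nonneg, div_le_iff₀ hRpos]; nlinarith
  · rw [hρ]; rw [hR] at hs2 ⊢; field_simp; nlinarith [hs2]
  · have hED : E - D = (r₁ * (R + r₁) / R - 2 * r₁) • u + ((r₁ / R) * s) • v := by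
      rw [hE, hD, sub_smul]; module
    have huv' : ⟪v, u⟫ = (0:ℝ) := by rw [real_inner_comm]; exact huv
    rw [hED, inner_add_left, real_inner_smul_left, real_inner_smul_left, huv',
      real_inner_self_eq_norm_sq, hu]
    have hc : r₁ * (R + r₁) / R - 2 * r₁ = -ρ := by
      rw [hρ, hR]; have h0 : r₁ + r₂ ≠ 0 := by positivity
      field_simp; ring
    rw [hc]; simp [abs_of_pos hρpos]
end

section
/- Let L be a line of the plane and A, B two distinct points not on L and lying strictly on the same side of L, such that the line through A and B meets L in a point G. Let K be a point of L with (dist G K)² = dist G A · dist G B. Then A, B, K are not collinear, and the circle through A, B and K meets L only at K; that is, L is tangent at K to the circumcircle of A, B, K. -/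
open EuclideanGeometry

/-- Core algebraic lemma: if two points `s • d` and `t • d` on a line through the origin
are both at distance `ρ` from `o`, and `s ≠ t`, then `s * t * ‖d‖²` is the power of the
origin with respect to the circle. -/
lemma circle_line_power {V : Type*} [NormedAddCommGroup V] [InnerProductSpace ℝ V]
    (o d : V) (s t ρ : ℝ) (hs : ‖o - s • d‖ = ρ) (ht : ‖o - t • d‖ = ρ) (hst : s ≠ t) :
    s * t * ‖d‖ ^ 2 = ‖o‖ ^ 2 - ρ ^ 2 := by
  have hs2 : ‖o - s • d‖ ^ 2 = ρ ^ 2 := by rw [hs]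
  have ht2 : ‖o - t • d‖ ^ 2 = ρ ^ 2 := by rw [ht]
  rw [norm_sub_sq_real] at hs2 ht2
  simp only [inner_smul_right, norm_smul, Real.norm_eq_abs, mul_pow, sq_abs] at hs2 ht2
  have key : (s - t) * (2 * inner ℝ o d - (s + t) * ‖d‖ ^ 2) = 0 := by linear_combination ht2 - hs2
  have h3 : 2 * (inner ℝ o d : ℝ) = (s + t) * ‖d‖ ^ 2 := by
    have := mul_eq_zero.1 key
    rcases this with h | h
    · exact absurd (sub_eq_zero.1 h) hst
    · linarith
  linear_combination (-1 : ℝ) * hs2 - s * h3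

/-- Mohr, *Euclides Danicus*, Second Part, Proposition 10 (converse of the power of a
point): let `A ≠ B` lie strictly on the same side of a line `L`, let `G` be a point
where the line `AB` meets `L`, and let `K ∈ L` satisfy `GK² = GA · GB`. Then `A`, `B`,
`K` are not collinear and any circle through `A`, `B`, `K` meets `L` only at `K`;
that is, `L` is tangent at `K` to the circumcircle of `A`, `B`, `K`. -/
theorem mohr_II_prop10_tangent_circle (A B G K : EuclideanSpace ℝ (Fin 2))
    (L : AffineSubspace ℝ (EuclideanSpace ℝ (Fin 2)))
    (hL : Module.finrank ℝ L.direction = 1)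
    (hAB : A ≠ B)
    (hside : L.SSameSide A B)
    (hGL : G ∈ L) (hGAB : G ∈ affineSpan ℝ ({A, B} : Set (EuclideanSpace ℝ (Fin 2))))
    (hKL : K ∈ L)
    (hK : (dist G K) ^ 2 = dist G A * dist G B) :
    ¬ Collinear ℝ ({A, B, K} : Set (EuclideanSpace ℝ (Fin 2))) ∧
      ∀ (O : EuclideanSpace ℝ (Fin 2)) (ρ : ℝ),
        dist O A = ρ → dist O B = ρ → dist O K = ρ →
          ∀ X ∈ L, dist O X = ρ → X = K := by
  have hA : A ∉ L := hside.2.1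
  have hB : B ∉ L := hside.2.2
  set e : EuclideanSpace ℝ (Fin 2) := B -ᵥ A with he_def
  have he : e ≠ 0 := vsub_ne_zero.2 hAB.symm
  obtain ⟨r, hr⟩ : ∃ r : ℝ, r • (B -ᵥ A) = G -ᵥ A := by
    rw [show G = (G -ᵥ A) +ᵥ A from (vsub_vadd _ _).symm] at hGAB
    exact vadd_left_mem_affineSpan_pair.1 hGAB
  have hAG : A -ᵥ G = (-r) • e := by
    rw [neg_smul, hr, neg_vsub_eq_vsub_rev]
  have hBG : B -ᵥ G = (1 - r) • e := by
    rw [sub_smul, one_smul, hr]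
    exact (vsub_sub_vsub_cancel_right B G A).symm
  set u : ℝ := -r with hu_def
  set v : ℝ := 1 - r with hv_def
  have hu : u ≠ 0 := by
    intro h
    rw [h, zero_smul, vsub_eq_zero_iff_eq] at hAG
    exact hA (hAG ▸ hGL)
  have hv : v ≠ 0 := by
    intro h
    rw [h, zero_smul, vsub_eq_zero_iff_eq] at hBG
    exact hB (hBG ▸ hGL)
  have huv : u ≠ v := by
    intro h
    apply hAB
    have : A -ᵥ G = B -ᵥ G := by rw [hAG, hBG, h]
    exact vsub_left_cancel this
  have huv_pos : 0 < u * v := by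
    rcases lt_or_gt_of_ne hu with hun | hup
    · rcases lt_or_gt_of_ne hv with hvn | hvp
      · exact mul_pos_of_neg_of_neg hun hvn
      · exfalso
        have hw : Wbtw ℝ A G B := by
          rw [wbtw_iff_sameRay_vsub]
          refine Or.inr (Or.inr ⟨v, -u, hvp, by linarith, ?_⟩)
          rw [show G -ᵥ A = (-u) • e by rw [← neg_vsub_eq_vsub_rev, hAG]; module, hBG]
          rw [smul_comm]
        exact hside.not_wOppSide (hw.wOppSide₁₃ hGL)
    · rcases lt_or_gt_of_ne hv with hvn | hvp
      · exfalso
        have hw : Wbtw ℝ B G A := by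
          rw [wbtw_iff_sameRay_vsub]
          refine Or.inr (Or.inr ⟨u, -v, hup, by linarith, ?_⟩)
          rw [show G -ᵥ B = (-v) • e by rw [← neg_vsub_eq_vsub_rev, hBG]; module, hAG]
          rw [smul_comm]
        exact hside.symm.not_wOppSide (hw.wOppSide₁₃ hGL)
      · positivity
  have hGAd : dist G A = |u| * ‖e‖ := by
    rw [dist_comm, dist_eq_norm_vsub (EuclideanSpace ℝ (Fin 2)), hAG, norm_smul,
      Real.norm_eq_abs]
  have hGBd : dist G B = |v| * ‖e‖ := by
    rw [dist_comm, dist_eq_norm_vsub (EuclideanSpace ℝ (Fin 2)), hBG, norm_smul,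
      Real.norm_eq_abs]
  have hprod : dist G A * dist G B = u * v * ‖e‖ ^ 2 := by
    rw [hGAd, hGBd, show |u| * ‖e‖ * (|v| * ‖e‖) = |u * v| * ‖e‖ ^ 2 by
      rw [abs_mul]; ring, abs_of_pos huv_pos]
  have hepos : 0 < ‖e‖ := norm_pos_iff.2 he
  have hKpos : 0 < dist G K ^ 2 := by
    rw [hK, hprod]; positivity
  have hKG : K ≠ G := by
    intro h
    rw [h, dist_self] at hKpos
    simp at hKpos
  constructor
  · intro hc
    have hKmem : K ∈ affineSpan ℝ ({A, B} : Set (EuclideanSpace ℝ (Fin 2))) :=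
      hc.mem_affineSpan_of_mem_of_ne (Set.mem_insert _ _)
        (Set.mem_insert_of_mem _ (Set.mem_insert _ _))
        (Set.mem_insert_of_mem _ (Set.mem_insert_of_mem _ rfl)) hAB
    obtain ⟨w, hw⟩ : ∃ w : ℝ, w • (B -ᵥ A) = K -ᵥ A := by
      rw [show K = (K -ᵥ A) +ᵥ A from (vsub_vadd _ _).symm] at hKmem
      exact vadd_left_mem_affineSpan_pair.1 hKmem
    have hKGvec : K -ᵥ G = (w - r) • e := by
      rw [sub_smul, hw, hr]
      exact (vsub_sub_vsub_cancel_right K G A).symm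
    have hwr : w - r ≠ 0 := by
      intro h
      rw [h, zero_smul, vsub_eq_zero_iff_eq] at hKGvec
      exact hKG hKGvec
    have hAdir : A -ᵥ G ∈ L.direction := by
      have hKdir : K -ᵥ G ∈ L.direction := AffineSubspace.vsub_mem_direction hKL hGL
      have : A -ᵥ G = (u / (w - r)) • (K -ᵥ G) := by
        rw [hKGvec, smul_smul, div_mul_cancel₀ _ hwr, hAG]
      rw [this]
      exact Submodule.smul_mem _ _ hKdir
    exact hA (by simpa using AffineSubspace.vadd_mem_of_mem_direction hAdir hGL)
  · intro O ρ hOA hOB hOK X hXL hOX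
    obtain ⟨d, hd0, hdspan⟩ := finrank_eq_one_iff'.1 hL
    obtain ⟨s, hs⟩ := hdspan ⟨K -ᵥ G, AffineSubspace.vsub_mem_direction hKL hGL⟩
    obtain ⟨t, ht⟩ := hdspan ⟨X -ᵥ G, AffineSubspace.vsub_mem_direction hXL hGL⟩
    set d' : EuclideanSpace ℝ (Fin 2) := (d : EuclideanSpace ℝ (Fin 2)) with hd'_def
    have hsd : s • d' = K -ᵥ G := congrArg Subtype.val hs
    have htd : t • d' = X -ᵥ G := congrArg Subtype.val ht
    have hd'0 : d' ≠ 0 := fun h => hd0 (Subtype.ext h)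
    have hd'pos : 0 < ‖d'‖ := norm_pos_iff.2 hd'0
    have hdist : ∀ (P : EuclideanSpace ℝ (Fin 2)) (c : ℝ), P -ᵥ G = c • d' →
        ‖(O -ᵥ G) - c • d'‖ = dist O P := by
      intro P c hc
      rw [← hc, vsub_sub_vsub_cancel_right, dist_eq_norm_vsub (EuclideanSpace ℝ (Fin 2))]
    have h1 : u * v * ‖e‖ ^ 2 = ‖O -ᵥ G‖ ^ 2 - ρ ^ 2 := by
      apply circle_line_power (O -ᵥ G) e u v ρ _ _ huv
      · rw [← hAG, vsub_sub_vsub_cancel_right,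
          ← dist_eq_norm_vsub (EuclideanSpace ℝ (Fin 2)), hOA]
      · rw [← hBG, vsub_sub_vsub_cancel_right,
          ← dist_eq_norm_vsub (EuclideanSpace ℝ (Fin 2)), hOB]
    have hs2 : s ^ 2 * ‖d'‖ ^ 2 = u * v * ‖e‖ ^ 2 := by
      rw [← hprod, ← hK, dist_comm, dist_eq_norm_vsub (EuclideanSpace ℝ (Fin 2)),
        ← hsd, norm_smul, Real.norm_eq_abs, mul_pow, sq_abs]
    have hsne : s ≠ 0 := by
      intro h
      rw [h] at hs2
      nlinarith [hs2, huv_pos, hepos]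
    by_contra hXK
    have hts : t ≠ s := by
      intro h
      apply hXK
      apply vsub_left_cancel
      rw [← hsd, ← htd, h]
    have h2 : s * t * ‖d'‖ ^ 2 = ‖O -ᵥ G‖ ^ 2 - ρ ^ 2 := by
      apply circle_line_power (O -ᵥ G) d' s t ρ _ _ hts.symm
      · rw [hdist K s hsd.symm, hOK]
      · rw [hdist X t htd.symm, hOX]
    have : t = s := by
      have h3 : s * t * ‖d'‖ ^ 2 = s ^ 2 * ‖d'‖ ^ 2 := by rw [h2, ← h1, hs2]
      have h4 : s * t = s ^ 2 := by
        have := mul_right_cancel₀ (by positivity : ‖d'‖ ^ 2 ≠ 0) h3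
        exact this
      have h5 : s * t = s * s := by rw [h4]; ring
      exact mul_left_cancel₀ hsne h5
    exact hts this
end

section
/- Let A, B, C be three non-collinear points of the plane, and let E be a point on segment CB and K a point on segment CA with dist C E · dist C K = (dist C B · dist C A)/2. Then the area of triangle CEK equals half the area of triangle ABC. If moreover dist C E + dist C K = (dist A B + dist B C + dist C A)/2, then also dist E B + dist B A + dist A K = dist K C + dist C E, so the segment EK divides both the area and the perimeter of the triangle into two equal parts. -/
open MeasureTheory

/-- Mohr, *Euclides Danicus*, Second Part, Proposition 12: if `E` lies on segment `CB`
and `K` on segment `CA` with `CE · CK = (CB · CA)/2`, then the triangle `CEK` has half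
the area of triangle `ABC`; and if moreover `CE + CK` equals half the perimeter of
`ABC`, then `EB + BA + AK = KC + CE`, so the segment `EK` divides both the area and
the perimeter into two equal parts. -/
theorem mohr_II_prop12_bisecting_line (A B C E K : EuclideanSpace ℝ (Fin 2))
    (hABC : ¬ Collinear ℝ ({A, B, C} : Set (EuclideanSpace ℝ (Fin 2))))
    (hE : E ∈ segment ℝ C B) (hK : K ∈ segment ℝ C A)
    (hprod : dist C E * dist C K = dist C B * dist C A / 2) :
    volume (convexHull ℝ ({C, E, K} : Set (EuclideanSpace ℝ (Fin 2)))) =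
        volume (convexHull ℝ ({A, B, C} : Set (EuclideanSpace ℝ (Fin 2)))) / 2 ∧
      (dist C E + dist C K = (dist A B + dist B C + dist C A) / 2 →
        dist E B + dist B A + dist A K = dist K C + dist C E) := by
  have hEB : dist C E + dist E B = dist C B := dist_add_dist_of_mem_segment hE
  have hKA : dist C K + dist K A = dist C A := dist_add_dist_of_mem_segment hK
  constructor
  · -- area part
    rw [segment_eq_image'] at hE hK
    obtain ⟨te, hte, hEeq⟩ := hE
    obtain ⟨ke, hke, hKeq⟩ := hK
    set v : EuclideanSpace ℝ (Fin 2) := B - C with hv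
    set w : EuclideanSpace ℝ (Fin 2) := A - C with hw
    have hBC : B ≠ C := ne₂₃_of_not_collinear hABC
    have hAC : A ≠ C := ne₁₃_of_not_collinear hABC
    have hdCB : dist C B > 0 := dist_pos.2 (Ne.symm hBC)
    have hdCA : dist C A > 0 := dist_pos.2 (Ne.symm hAC)
    have hdE : dist C E = te * dist C B := by
      rw [← hEeq, dist_self_add_right, norm_smul, Real.norm_eq_abs,
        abs_of_nonneg hte.1, ← dist_eq_norm, dist_comm B C]
    have hdK : dist C K = ke * dist C A := by
      rw [← hKeq, dist_self_add_right, norm_smul, Real.norm_eq_abs,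
        abs_of_nonneg hke.1, ← dist_eq_norm, dist_comm A C]
    have hteke : te * ke = 1 / 2 := by
      rw [hdE, hdK] at hprod
      have h1 : (te * ke) * (dist C B * dist C A) = (1/2) * (dist C B * dist C A) := by
        ring_nf
        ring_nf at hprod
        linarith
      have h2 : dist C B * dist C A ≠ 0 := by positivity
      exact mul_right_cancel₀ h2 h1
    -- linear independence of v, w
    have hli : LinearIndependent ℝ ![v, w] := by
      rw [LinearIndependent.pair_iff]
      intro a b hab
      by_contra hcon
      apply hABC
      rw [not_and_or] at hcon
      rw [collinear_iff_exists_forall_eq_smul_vadd]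
      by_cases hb : b = 0
      · -- then a ≠ 0 and a • v = 0, so v = 0, i.e. B = C
        have ha : a ≠ 0 := by tauto
        have hv0 : v = 0 := by
          have : a • v = 0 := by
            have := hab; rw [hb, zero_smul, add_zero] at this; exact this
          exact (smul_eq_zero.1 this).resolve_left ha
        have hBC' : B = C := sub_eq_zero.1 hv0
        exact absurd hBC' hBC
      · refine ⟨C, v, ?_⟩
        have hweq : w = (-(a / b)) • v := by
          have h1 : b • w = -(a • v) := by
            rw [eq_neg_iff_add_eq_zero, add_comm]; exact hab
          calc w = b⁻¹ • (b • w) := by rw [smul_smul, inv_mul_cancel₀ hb, one_smul]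
            _ = (-(a / b)) • v := by
                rw [h1, smul_neg, smul_smul, ← neg_smul]
                congr 1
                field_simp
        intro p hp
        simp only [Set.mem_insert_iff, Set.mem_singleton_iff] at hp
        rcases hp with rfl | rfl | rfl
        · exact ⟨-(a / b), by rw [← hweq]; simp [hw, vadd_eq_add]⟩
        · exact ⟨1, by simp [hv, vadd_eq_add]⟩
        · exact ⟨0, by simp⟩
    have hcard : Fintype.card (Fin 2) = Module.finrank ℝ (EuclideanSpace ℝ (Fin 2)) := by
      simp [finrank_euclideanSpace_fin]
    let b := basisOfLinearIndependentOfCardEqFinrank hli hcard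
    have hb0 : b 0 = v := by
      simp [b, coe_basisOfLinearIndependentOfCardEqFinrank]
    have hb1 : b 1 = w := by
      simp [b, coe_basisOfLinearIndependentOfCardEqFinrank]
    let L : EuclideanSpace ℝ (Fin 2) →ₗ[ℝ] EuclideanSpace ℝ (Fin 2) :=
      b.constr ℝ ![te • v, ke • w]
    have hL0 : L (b 0) = te • b 0 := by
      rw [show L (b 0) = ![te • v, ke • w] 0 from b.constr_basis ℝ _ 0]
      simp [hb0]
    have hL1 : L (b 1) = ke • b 1 := by
      rw [show L (b 1) = ![te • v, ke • w] 1 from b.constr_basis ℝ _ 1]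
      simp [hb1]
    have hdet : LinearMap.det L = te * ke := by
      rw [← LinearMap.det_toMatrix b]
      have hm : LinearMap.toMatrix b b L = Matrix.diagonal ![te, ke] := by
        ext i j
        rw [LinearMap.toMatrix_apply]
        fin_cases i <;> fin_cases j <;>
          simp [hL0, hL1, Module.Basis.repr_self, Matrix.diagonal]
      rw [hm, Matrix.det_diagonal]
      simp
    -- affine map
    let f : EuclideanSpace ℝ (Fin 2) →ᵃ[ℝ] EuclideanSpace ℝ (Fin 2) :=
      { toFun := fun x => L (x - C) + C
        linear := L
        map_vadd' := fun p u => by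
          simp only [vadd_eq_add]
          rw [show u + p - C = u + (p - C) by abel, map_add]
          abel }
    have hfA : f A = K := by
      show L (A - C) + C = K
      rw [← hw, ← hb1, hL1, hb1, ← hKeq]
      abel
    have hfB : f B = E := by
      show L (B - C) + C = E
      rw [← hv, ← hb0, hL0, hb0, ← hEeq]
      abel
    have hfC : f C = C := by
      show L (C - C) + C = C
      simp
    have himg : f '' (convexHull ℝ ({A, B, C} : Set (EuclideanSpace ℝ (Fin 2)))) =
        convexHull ℝ ({C, E, K} : Set (EuclideanSpace ℝ (Fin 2))) := by
      rw [AffineMap.image_convexHull]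
      congr 1
      rw [Set.image_insert_eq, Set.image_insert_eq, Set.image_singleton, hfA, hfB, hfC]
      ext x
      simp only [Set.mem_insert_iff, Set.mem_singleton_iff]
      tauto
    have hvol : volume (f '' (convexHull ℝ ({A, B, C} : Set (EuclideanSpace ℝ (Fin 2))))) =
        ENNReal.ofReal |LinearMap.det L| *
          volume (convexHull ℝ ({A, B, C} : Set (EuclideanSpace ℝ (Fin 2)))) := by
      set s := convexHull ℝ ({A, B, C} : Set (EuclideanSpace ℝ (Fin 2)))
      have hcomp : f '' s = (C +ᵥ ·) '' (⇑L '' ((-C +ᵥ ·) '' s)) := by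
        rw [Set.image_image, Set.image_image]
        apply Set.image_congr'
        intro x
        show L (x - C) + C = C + L (-C + x)
        rw [show -C + x = x - C by abel]
        abel
      rw [hcomp, Set.image_vadd, measure_vadd, Measure.addHaar_image_linearMap,
        Set.image_vadd, measure_vadd]
    rw [← himg, hvol, hdet, hteke]
    rw [show |(1:ℝ)/2| = 1/2 by norm_num]
    rw [ENNReal.ofReal_div_of_pos (by norm_num)]
    norm_num
    rw [ENNReal.div_eq_inv_mul]
  · intro hper
    rw [dist_comm K C, dist_comm B A, dist_comm A K, dist_comm B C] at *
    linarith
end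

section
/- Let O be a point of the plane, r > 0, u and w orthonormal vectors, and s > 0. If the four points O − (s/2)·u, O + (s/2)·u, O + (s/2)·u + s·w, O − (s/2)·u + s·w form a square of side s whose two upper vertices lie on the circle of center O and radius r (i.e. dist O (O + (s/2)·u + s·w) = r), then s = 2r/√5; equivalently s² = (2r)·(2r/5), so the side of the largest square inscribed in a semicircle is the geometric mean of the diameter and its fifth part. -/
open scoped RealInnerProductSpace

/-- Mohr, *Euclides Danicus*, Second Part, Proposition 14: if the square with vertices
`O − (s/2)·u`, `O + (s/2)·u`, `O + (s/2)·u + s·w`, `O − (s/2)·u + s·w` (of side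
`s > 0`, base centered at the center `O` of a semicircle of radius `r`) has its upper
vertices on the circle of center `O` and radius `r`, then `s = 2r/√5`; equivalently
`s² = (2r)·(2r/5)`: the side of the largest square inscribed in a semicircle is the
geometric mean of the diameter and its fifth part. -/
theorem mohr_II_prop14_square_in_semicircle (O u w : EuclideanSpace ℝ (Fin 2))
    (r s : ℝ) (hr : 0 < r) (hs : 0 < s)
    (hu : ‖u‖ = 1) (hw : ‖w‖ = 1) (huw : ⟪u, w⟫ = 0)
    (hvertex : dist O (O + (s / 2) • u + s • w) = r) :
    s = 2 * r / Real.sqrt 5 ∧ s ^ 2 = (2 * r) * (2 * r / 5) := by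
  have h1 : dist O (O + (s / 2) • u + s • w) = ‖(s / 2) • u + s • w‖ := by
    rw [dist_eq_norm, add_assoc]
    rw [show O - (O + ((s / 2) • u + s • w)) = -((s / 2) • u + s • w) by abel, norm_neg]
  have h2 : ‖(s / 2) • u + s • w‖ ^ 2 = 5 * s ^ 2 / 4 := by
    rw [norm_add_sq_real]
    rw [norm_smul, norm_smul, inner_smul_left, inner_smul_right, huw, hu, hw]
    simp [abs_of_pos hs, abs_of_pos (half_pos hs)]
    ring
  rw [h1] at hvertex
  have hsq : 5 * s ^ 2 / 4 = r ^ 2 := by rw [← h2, hvertex]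
  have hs2 : s ^ 2 = (2 * r) * (2 * r / 5) := by linarith
  constructor
  · have h5 : Real.sqrt 5 > 0 := by positivity
    have : (s * Real.sqrt 5) ^ 2 = (2 * r) ^ 2 := by
      rw [mul_pow, Real.sq_sqrt (by norm_num : (5:ℝ) ≥ 0)]
      ring_nf
      nlinarith
    have heq : s * Real.sqrt 5 = 2 * r := by
      nlinarith [mul_pos hs h5, hr]
    field_simp [h5.ne'] at heq ⊢
    linarith
  · exact hs2
end

section
/- Let A ≠ B be points of the plane, d = dist A B, E the midpoint of A and B, and ρ ≥ 4 a real number. Let F be a point with ⟨F − E, B − A⟩ = 0 and dist E F = ρ·d/8. Then for every point G with dist F G = √((ρ·d/8)² − (d/2)²), one has (dist A G)² + (dist B G)² = ρ · (area of triangle A G B). -/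
open scoped RealInnerProductSpace
open MeasureTheory Pointwise
open scoped ENNReal

noncomputable section
abbrev E2 := EuclideanSpace ℝ (Fin 2)

def T : Set E2 := {x | 0 ≤ x 0 ∧ 0 ≤ x 1 ∧ x 0 + x 1 ≤ 1}

lemma closedT : IsClosed T := by
  have h0 : Continuous fun x : E2 => x 0 := PiLp.continuous_apply (p := 2) (β := fun _ : Fin 2 => ℝ) 0
  have h1 : Continuous fun x : E2 => x 1 := PiLp.continuous_apply (p := 2) (β := fun _ : Fin 2 => ℝ) 1
  exact ((isClosed_le continuous_const h0).inter ((isClosed_le continuous_const h1).inter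
    (isClosed_le (h0.add h1) continuous_const)))

def ff : E2 →ₗ[ℝ] ℝ where
  toFun x := x 0 + x 1
  map_add' x y := by simp [PiLp.add_apply]; ring
  map_smul' r x := by simp [PiLp.smul_apply, smul_eq_mul]; ring

def cc : E2 := (WithLp.equiv 2 (Fin 2 → ℝ)).symm ![1,1]

lemma cc_apply (i : Fin 2) : cc i = 1 := by fin_cases i <;> rfl

lemma volQ : volume {x : E2 | x 0 ∈ Set.Icc (0:ℝ) 1 ∧ x 1 ∈ Set.Icc (0:ℝ) 1} = 1 := by
  have e := EuclideanSpace.volume_preserving_symm_measurableEquiv_toLp (Fin 2)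
  have : {x : E2 | x 0 ∈ Set.Icc (0:ℝ) 1 ∧ x 1 ∈ Set.Icc (0:ℝ) 1}
      = ((MeasurableEquiv.toLp 2 (Fin 2 → ℝ)).symm) ⁻¹' (Set.pi Set.univ fun _ => Set.Icc (0:ℝ) 1) := by
    ext x
    simp only [Set.mem_setOf_eq, Set.mem_preimage, Set.mem_pi, Set.mem_univ, forall_true_left,
      Fin.forall_fin_two, Set.mem_Icc]
    exact Iff.rfl
  rw [this, e.measure_preimage (MeasurableSet.univ_pi fun _ => measurableSet_Icc).nullMeasurableSet,
    volume_pi_pi]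
  simp [Real.volume_Icc]

lemma volT : volume T = ENNReal.ofReal (1/2) := by
  set T' : Set E2 := (fun x => cc - x) ⁻¹' T with hT'
  have hinv : Function.Involutive (fun x : E2 => cc - x) := fun x => by simp
  have hcont : Continuous (fun x : E2 => cc - x) := continuous_const.sub continuous_id
  have hT'm : MeasurableSet T' := (closedT.preimage hcont).measurableSet
  -- volume T' = volume T
  have hvol' : volume T' = volume T := by
    have : T' = cc +ᵥ (-T) := by
      ext x
      simp [hT', T, Set.mem_vadd_set, Set.mem_neg]
      constructor
      · intro h
        refine ⟨x - cc, ?_, by abel⟩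
        simp only [PiLp.neg_apply, PiLp.sub_apply, cc_apply] at h ⊢
        refine ⟨by linarith [h.1], by linarith [h.2.1], by linarith [h.2.2]⟩
      · rintro ⟨v, hv, rfl⟩
        simp only [PiLp.add_apply, cc_apply]
        refine ⟨by linarith [hv.1], by linarith [hv.2.1], by linarith [hv.2.2]⟩
    rw [this, measure_vadd, Measure.measure_neg]
  -- union is the square
  have hunion : T ∪ T' = {x : E2 | x 0 ∈ Set.Icc (0:ℝ) 1 ∧ x 1 ∈ Set.Icc (0:ℝ) 1} := by
    ext x
    simp only [Set.mem_union, hT', Set.mem_preimage, T, Set.mem_setOf_eq, Set.mem_Icc,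
      PiLp.sub_apply, cc_apply]
    constructor
    · rintro (⟨h0, h1, h2⟩ | ⟨h0, h1, h2⟩) <;> constructor <;> constructor <;> linarith
    · rintro ⟨⟨h0, h1⟩, ⟨h2, h3⟩⟩
      rcases le_total (x 0 + x 1) 1 with h | h
      · exact Or.inl ⟨h0, h2, h⟩
      · exact Or.inr ⟨by linarith, by linarith, by linarith⟩
  -- intersection is null
  have hinter : volume (T ∩ T') ≤ 0 := by
    set p0 : E2 := EuclideanSpace.single 0 1 with hp0
    have hp00 : p0 0 = 1 := by simp [hp0]
    have hp01 : p0 1 = 0 := by simp [hp0]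
    have hsub : T ∩ T' ⊆ (AffineSubspace.mk' p0 (LinearMap.ker ff) : Set E2) := by
      rintro x ⟨⟨_, _, h⟩, h'⟩
      simp only [hT', Set.mem_preimage, T, Set.mem_setOf_eq, PiLp.sub_apply, cc_apply] at h'
      rw [SetLike.mem_coe, AffineSubspace.mem_mk']
      simp only [LinearMap.mem_ker, ff, LinearMap.coe_mk, AddHom.coe_mk]
      have hx : (x -ᵥ p0 : E2) 0 + (x -ᵥ p0) 1 = x 0 + x 1 - 1 := by
        simp only [vsub_eq_sub, PiLp.sub_apply, hp00, hp01]; ring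
      rw [hx]
      linarith [h'.2.2]
    calc volume (T ∩ T') ≤ volume (AffineSubspace.mk' p0 (LinearMap.ker ff) : Set E2) :=
          measure_mono hsub
      _ = 0 := by
          apply Measure.addHaar_affineSubspace
          intro htop
          have h1 : (0 : E2) ∈ AffineSubspace.mk' p0 (LinearMap.ker ff) := by
            rw [htop]; trivial
          rw [AffineSubspace.mem_mk'] at h1
          simp only [LinearMap.mem_ker, ff, LinearMap.coe_mk, AddHom.coe_mk] at h1
          rw [show ((0:E2) -ᵥ p0 : E2) = -p0 from by simp] at h1
          norm_num [PiLp.neg_apply, hp00, hp01] at h1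
  have key := measure_union_add_inter (μ := volume) T hT'm
  rw [hunion, volQ, nonpos_iff_eq_zero.mp hinter, add_zero, hvol'] at key
  have h2 : (2 : ℝ≥0∞) * volume T = 1 := by rw [two_mul]; exact key.symm
  have h3 : (2:ℝ≥0∞) * ENNReal.ofReal (1/2) = 1 := by
    rw [← ENNReal.ofReal_ofNat, ← ENNReal.ofReal_mul (by norm_num)]
    norm_num
  exact (ENNReal.mul_right_inj (by norm_num) (by norm_num)).mp (h2.trans h3.symm)

lemma convexT : Convex ℝ T := by
  rintro z ⟨hz0, hz1, hz2⟩ w ⟨hw0, hw1, hw2⟩ a b ha hb hab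
  refine ⟨?_, ?_, ?_⟩ <;>
    simp only [PiLp.add_apply, PiLp.smul_apply, smul_eq_mul] <;> nlinarith

lemma hullT : convexHull ℝ ({0, EuclideanSpace.single 0 1, EuclideanSpace.single 1 1} : Set E2) = T := by
  apply le_antisymm
  · apply convexHull_min _ convexT
    rintro z (rfl | rfl | rfl) <;>
      refine ⟨?_, ?_, ?_⟩ <;>
        simp [EuclideanSpace.single_apply]
  · intro z hz
    obtain ⟨hz0, hz1, hz2⟩ := hz
    have := Finset.centerMass_mem_convexHull (Finset.univ : Finset (Fin 3))
      (w := ![1 - z 0 - z 1, z 0, z 1])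
      (z := ![0, EuclideanSpace.single 0 1, EuclideanSpace.single 1 1])
      (by intro i _; fin_cases i <;> simp <;> linarith)
      (by simp [Fin.sum_univ_three]; linarith)
      (s := ({0, EuclideanSpace.single 0 1, EuclideanSpace.single 1 1} : Set E2))
      (by intro i _; fin_cases i <;> simp)
    convert this using 1
    rw [Finset.centerMass]
    simp only [Fin.sum_univ_three, Matrix.cons_val_zero, Matrix.cons_val_one, Matrix.head_cons,
      Matrix.cons_val_two, Matrix.tail_cons, smul_zero, zero_add]
    rw [show (1 - z 0 - z 1) + z 0 + z 1 = 1 by ring, inv_one, one_smul]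
    ext i
    fin_cases i <;>
      simp [PiLp.add_apply, PiLp.smul_apply, EuclideanSpace.single_apply, smul_eq_mul]

def Lmap (u v : E2) : E2 →ₗ[ℝ] E2 where
  toFun x := x 0 • u + x 1 • v
  map_add' x y := by
    simp only [PiLp.add_apply, add_smul]
    abel
  map_smul' r x := by
    simp only [PiLp.smul_apply, smul_eq_mul, RingHom.id_apply, mul_smul, smul_add]

lemma det_Lmap (u v : E2) : LinearMap.det (Lmap u v) = u 0 * v 1 - v 0 * u 1 := by
  classical
  let b := (EuclideanSpace.basisFun (Fin 2) ℝ).toBasis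
  rw [← LinearMap.det_toMatrix b (Lmap u v)]
  rw [Matrix.det_fin_two]
  have hb : ∀ i, b i = EuclideanSpace.single i 1 := fun i => by
    simp [b, EuclideanSpace.basisFun_apply]
  have hM : ∀ i j : Fin 2, LinearMap.toMatrix b b (Lmap u v) i j
      = (Lmap u v (b j)) i := fun i j => by
    rw [LinearMap.toMatrix_apply]
    rfl
  have h0 : Lmap u v (b 0) = u := by
    rw [hb]
    show (EuclideanSpace.single (0:Fin 2) (1:ℝ)) 0 • u + (EuclideanSpace.single (0:Fin 2) (1:ℝ)) 1 • v = u
    simp [EuclideanSpace.single_apply]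
  have h1 : Lmap u v (b 1) = v := by
    rw [hb]
    show (EuclideanSpace.single (1:Fin 2) (1:ℝ)) 0 • u + (EuclideanSpace.single (1:Fin 2) (1:ℝ)) 1 • v = v
    simp [EuclideanSpace.single_apply]
  rw [hM, hM, hM, hM, h0, h1]

lemma area_triangle (a b c : E2) :
    (volume (convexHull ℝ ({a, b, c} : Set E2))).toReal
      = |(b 0 - a 0) * (c 1 - a 1) - (b 1 - a 1) * (c 0 - a 0)| / 2 := by
  classical
  set u := b - a with hu
  set v := c - a with hv
  set L := Lmap u v with hL
  set Fm : E2 →ᵃ[ℝ] E2 := AffineMap.mk' (fun x => a + L x) L 0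
    (by intro p; simp [add_comm]) with hFm
  have hFma : ∀ x : E2, Fm x = a + L x := fun x => by
    rw [hFm, AffineMap.coe_mk']
  have himg : Fm '' ({0, EuclideanSpace.single 0 1, EuclideanSpace.single 1 1} : Set E2)
      = {a, b, c} := by
    have e0 : Fm 0 = a := by
      rw [hFma]
      show a + ((0:E2) 0 • u + (0:E2) 1 • v) = a
      simp
    have e1 : Fm (EuclideanSpace.single 0 1) = b := by
      rw [hFma]
      show a + ((EuclideanSpace.single (0:Fin 2) (1:ℝ)) 0 • u + (EuclideanSpace.single (0:Fin 2) (1:ℝ)) 1 • v) = b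
      simp [EuclideanSpace.single_apply, hu]
    have e2 : Fm (EuclideanSpace.single 1 1) = c := by
      rw [hFma]
      show a + ((EuclideanSpace.single (1:Fin 2) (1:ℝ)) 0 • u + (EuclideanSpace.single (1:Fin 2) (1:ℝ)) 1 • v) = c
      simp [EuclideanSpace.single_apply, hv]
    rw [Set.image_insert_eq, Set.image_insert_eq, Set.image_singleton, e0, e1, e2]
  have hch : convexHull ℝ ({a, b, c} : Set E2) = Fm '' T := by
    rw [← himg, ← AffineMap.image_convexHull, hullT]
  have hFmT : Fm '' T = a +ᵥ (L '' T) := by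
    ext z
    simp only [Set.mem_image, Set.mem_vadd_set]
    constructor
    · rintro ⟨w, hw, rfl⟩
      exact ⟨L w, ⟨w, hw, rfl⟩, by rw [hFma]; rfl⟩
    · rintro ⟨w, ⟨w', hw', rfl⟩, rfl⟩
      exact ⟨w', hw', by rw [hFma]; rfl⟩
  rw [hch, hFmT, measure_vadd, Measure.addHaar_image_linearMap, volT, det_Lmap,
    ← ENNReal.ofReal_mul (abs_nonneg _)]
  rw [ENNReal.toReal_ofReal (by positivity)]
  rw [hu, hv]
  simp only [PiLp.sub_apply]
  rw [show (b 0 - a 0) * (c 1 - a 1) - (c 0 - a 0) * (b 1 - a 1)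
    = (b 0 - a 0) * (c 1 - a 1) - (b 1 - a 1) * (c 0 - a 0) from by ring]
  ring

lemma alg (p q s t x y d ρ : ℝ) (hd0 : 0 < d) (hρ : 4 ≤ ρ)
    (hd2 : p^2 + q^2 = d^2) (hperp : s*p + t*q = 0) (hst : s^2 + t^2 = (ρ*d/8)^2)
    (hcirc : (x - s)^2 + (y - t)^2 = (ρ*d/8)^2 - (d/2)^2) :
    (x + p/2)^2 + (y + q/2)^2 + ((x - p/2)^2 + (y - q/2)^2) = ρ * (|x*q - y*p| / 2) := by
  have hS : x^2 + y^2 + d^2/4 = 2*(s*x + t*y) := by linear_combination hcirc - hst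
  have hS0 : 0 < s*x + t*y := by nlinarith [sq_nonneg x, sq_nonneg y, pow_pos hd0 2]
  have hSd : (s*x + t*y) * d^2 = (s*q - t*p) * (x*q - y*p) := by
    linear_combination (x*p + y*q) * hperp - (s*x + t*y) * hd2
  have hv2 : (s*q - t*p)^2 = (ρ*d^2/8)^2 := by
    linear_combination (p^2 + q^2) * hst + (ρ*d/8)^2 * hd2 - (s*p + t*q) * hperp
  have hvabs : |s*q - t*p| = ρ*d^2/8 := by
    rw [← abs_of_nonneg (show (0:ℝ) ≤ ρ*d^2/8 by nlinarith [sq_nonneg d])]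
    exact (sq_eq_sq_iff_abs_eq_abs _ _).mp hv2
  have hgoal : (x + p/2)^2 + (y + q/2)^2 + ((x - p/2)^2 + (y - q/2)^2) = 4*(s*x + t*y) := by
    linear_combination 2*hS + (1/2)*hd2
  rw [hgoal]
  rcases (abs_eq (show (0:ℝ) ≤ ρ*d^2/8 by nlinarith [sq_nonneg d])).mp hvabs with hv | hv
  · rcases le_or_gt 0 (x*q - y*p) with hu | hu
    · rw [abs_of_nonneg hu]
      have h8 : (4*(s*x + t*y)) * d^2 = (ρ * ((x*q - y*p)/2)) * d^2 := by
        rw [hv] at hSd; linear_combination 4*hSd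
      exact mul_right_cancel₀ (pow_ne_zero 2 hd0.ne') h8
    · exfalso
      rw [hv] at hSd
      nlinarith [mul_pos hS0 (pow_pos hd0 2), pow_pos hd0 2]
  · rcases le_or_gt (x*q - y*p) 0 with hu | hu
    · rw [abs_of_nonpos hu]
      have h8 : (4*(s*x + t*y)) * d^2 = (ρ * (-(x*q - y*p)/2)) * d^2 := by
        rw [hv] at hSd; linear_combination 4*hSd
      exact mul_right_cancel₀ (pow_ne_zero 2 hd0.ne') h8
    · exfalso
      rw [hv] at hSd
      nlinarith [mul_pos hS0 (pow_pos hd0 2), pow_pos hd0 2]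

lemma dsq (x y : E2) : dist x y ^ 2 = (x 0 - y 0)^2 + (x 1 - y 1)^2 := by
  rw [EuclideanSpace.dist_eq, Real.sq_sqrt (by positivity)]
  simp [Fin.sum_univ_two, Real.dist_eq, sq_abs]

/-- Mohr, *Euclides Danicus*, Second Part, Proposition 16: given `A ≠ B` with
`d = dist A B`, a ratio `ρ ≥ 4`, and `F` on the perpendicular bisector of `AB` at
distance `ρ·d/8` from the midpoint `E`, every point `G` of the circle of center `F`
and radius `√((ρ·d/8)² − (d/2)²)` satisfies `GA² + GB² = ρ · area(AGB)`. -/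
theorem mohr_II_prop16_locus (A B E F : EuclideanSpace ℝ (Fin 2)) (d ρ : ℝ)
    (hAB : A ≠ B) (hd : d = dist A B) (hρ : 4 ≤ ρ)
    (hE : E = midpoint ℝ A B)
    (hFperp : ⟪F - E, B - A⟫ = 0) (hEF : dist E F = ρ * d / 8) :
    ∀ G : EuclideanSpace ℝ (Fin 2),
      dist F G = Real.sqrt ((ρ * d / 8) ^ 2 - (d / 2) ^ 2) →
        (dist A G) ^ 2 + (dist B G) ^ 2 =
          ρ * (volume (convexHull ℝ ({A, G, B} : Set (EuclideanSpace ℝ (Fin 2))))).toReal := by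
  intro G hG
  have hd0 : 0 < d := hd ▸ dist_pos.mpr hAB
  have hE0 : E 0 = (A 0 + B 0)/2 := by
    rw [hE, midpoint_eq_smul_add]
    simp [PiLp.smul_apply, PiLp.add_apply, smul_eq_mul]
    ring
  have hE1 : E 1 = (A 1 + B 1)/2 := by
    rw [hE, midpoint_eq_smul_add]
    simp [PiLp.smul_apply, PiLp.add_apply, smul_eq_mul]
    ring
  have hd2 : (B 0 - A 0)^2 + (B 1 - A 1)^2 = d^2 := by
    rw [hd, dsq]; ring
  have hperp : (F 0 - E 0)*(B 0 - A 0) + (F 1 - E 1)*(B 1 - A 1) = 0 := by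
    have := hFperp
    simp only [PiLp.inner_apply, RCLike.inner_apply, starRingEnd_apply, star_trivial,
      PiLp.sub_apply, Fin.sum_univ_two] at this
    linear_combination this
  have hst : (F 0 - E 0)^2 + (F 1 - E 1)^2 = (ρ*d/8)^2 := by
    have h := congrArg (· ^ 2) hEF
    rw [dsq] at h
    linear_combination h
  have hW : 0 ≤ (ρ * d / 8) ^ 2 - (d / 2) ^ 2 := by nlinarith [mul_nonneg (sq_nonneg d) (show (0:ℝ) ≤ ρ^2 - 16 by nlinarith)]
  have hcirc : ((G 0 - E 0) - (F 0 - E 0))^2 + ((G 1 - E 1) - (F 1 - E 1))^2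
      = (ρ*d/8)^2 - (d/2)^2 := by
    have h := congrArg (· ^ 2) hG
    rw [dsq, Real.sq_sqrt hW] at h
    linear_combination h
  have key := alg (B 0 - A 0) (B 1 - A 1) (F 0 - E 0) (F 1 - E 1)
    (G 0 - E 0) (G 1 - E 1) d ρ hd0 hρ hd2 hperp hst hcirc
  rw [area_triangle, dsq A G, dsq B G]
  have habs : |(G 0 - A 0) * (B 1 - A 1) - (G 1 - A 1) * (B 0 - A 0)|
      = |(G 0 - E 0)*(B 1 - A 1) - (G 1 - E 1)*(B 0 - A 0)| := by
    congr 1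
    rw [hE0, hE1]; ring
  rw [habs]
  rw [hE0, hE1] at key ⊢
  linear_combination key

end
end

section
/- Let E, K be points of the plane and R > k > 0 with dist E K + k ≤ R (so the closed disc of center K and radius k is contained in the closed disc of center E and radius R). Then the centroid of the region obtained by removing the smaller disc from the larger one is M = E + (k²/(R² − k²)) · (E − K); that is, ∫ x over (closedBall E R \ closedBall K k) with respect to two-dimensional Lebesgue measure equals π(R² − k²) · M. -/
open MeasureTheory Metric

lemma int_ball_zero (r : ℝ) :
    ∫ x in closedBall (0 : EuclideanSpace ℝ (Fin 2)) r, x = 0 := by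
  have h : MeasurePreserving (fun x : EuclideanSpace ℝ (Fin 2) => -x) volume volume :=
    Measure.measurePreserving_neg volume
  have he : MeasurableEmbedding (fun x : EuclideanSpace ℝ (Fin 2) => -x) :=
    (Homeomorph.neg _).measurableEmbedding
  have h2 := h.setIntegral_preimage_emb he (fun x => x) (closedBall (0 : EuclideanSpace ℝ (Fin 2)) r)
  simp only [Set.neg_preimage, neg_closedBall, neg_zero] at h2
  have h3 : (2:ℝ) • (∫ x in closedBall (0 : EuclideanSpace ℝ (Fin 2)) r, x) = 0 := by
    rw [two_smul]
    nth_rewrite 1 [← h2]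
    rw [integral_neg, neg_add_cancel]
  exact (smul_eq_zero.mp h3).resolve_left (by norm_num)

lemma int_id_on (C : EuclideanSpace ℝ (Fin 2)) (r : ℝ) :
    IntegrableOn (fun x : EuclideanSpace ℝ (Fin 2) => x) (closedBall C r) volume :=
  continuous_id.continuousOn.integrableOn_compact (isCompact_closedBall C r)

lemma int_ball (C : EuclideanSpace ℝ (Fin 2)) (r : ℝ) (hr : 0 ≤ r) :
    ∫ x in closedBall C r, x = (Real.pi * r ^ 2) • C := by
  have h : MeasurePreserving (fun x : EuclideanSpace ℝ (Fin 2) => C + x) volume volume :=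
    measurePreserving_add_left volume C
  have he : MeasurableEmbedding (fun x : EuclideanSpace ℝ (Fin 2) => C + x) :=
    (Homeomorph.addLeft C).measurableEmbedding
  have h2 := h.setIntegral_preimage_emb he (fun x => x) (closedBall C r)
  have hp : (fun x : EuclideanSpace ℝ (Fin 2) => C + x) ⁻¹' closedBall C r = closedBall 0 r := by
    ext x; simp [dist_eq_norm]
  rw [hp] at h2
  rw [← h2, integral_add (show IntegrableOn (fun _ : EuclideanSpace ℝ (Fin 2) => C) (closedBall 0 r) volume from
    integrableOn_const (measure_closedBall_lt_top).ne) (int_id_on 0 r),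
    int_ball_zero, add_zero, setIntegral_const]
  congr 1
  rw [measureReal_def, EuclideanSpace.volume_closedBall]
  simp only [Fintype.card_fin]
  rw [show ((2:ℕ) / 2 + 1 : ℝ) = 2 by norm_num, Real.Gamma_two, div_one,
    Real.sq_sqrt Real.pi_pos.le, ← ENNReal.ofReal_pow hr, ← ENNReal.ofReal_mul (by positivity),
    ENNReal.toReal_ofReal (by positivity)]
  ring

/-- Mohr, *Euclides Danicus*, Second Part, Proposition 17: the center of gravity of
the region obtained by removing the disc of center `K` and radius `k` from the disc
of center `E` and radius `R` containing it is the point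
`M = E + (k²/(R² − k²)) • (E − K)`: the integral of the identity over the region
(whose measure is `π(R² − k²)`) equals `π(R² − k²) • M`. -/
theorem mohr_II_prop17_centroid (E K : EuclideanSpace ℝ (Fin 2)) (R k : ℝ)
    (hk : 0 < k) (hkR : k < R) (hsub : dist E K + k ≤ R) :
    ∫ x in (Metric.closedBall E R \ Metric.closedBall K k), x =
      (Real.pi * (R ^ 2 - k ^ 2)) • (E + (k ^ 2 / (R ^ 2 - k ^ 2)) • (E - K)) := by
  have hts : closedBall K k ⊆ closedBall E R := fun x hx => by
    rw [mem_closedBall] at *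
    calc dist x E ≤ dist x K + dist K E := dist_triangle x K E
    _ ≤ k + dist E K := by rw [dist_comm K E]; linarith
    _ ≤ R := by linarith
  rw [integral_diff measurableSet_closedBall (int_id_on E R) hts,
    int_ball E R (by linarith), int_ball K k hk.le]
  have hne : R ^ 2 - k ^ 2 ≠ 0 := by nlinarith
  have hc : Real.pi * (R ^ 2 - k ^ 2) * (k ^ 2 / (R ^ 2 - k ^ 2)) = Real.pi * k ^ 2 := by
    field_simp
  rw [smul_add, smul_smul, hc]
  module
end

section
/- Perspective projection of a floor point (correctness of Mohr's construction): in ℝ³, let the glass be the plane Π = {p : p₂ = 0}, let the eye be at O = (0, −w, h) with w > 0, h > 0, and let A = (a₁, a₂, 0) be a point of the floor with a₂ > 0. Then the line through O and A meets Π in exactly one point, namely I = (a₁·w/(w + a₂), 0, h·a₂/(w + a₂)); in particular the height of the image above the ground line is h·a₂/(w + a₂), i.e. 'as SW plus AG is to AG, so SH is to HI'. -/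
/-- Mohr, *Euclides Danicus*, Second Part, Proposition 19 (perspective projection of a
floor point): in ℝ³ with coordinates (along the ground line, horizontal distance from
the glass plane, height), let the glass be the plane `p 1 = 0`, the eye at
`O = (0, −w, h)` with `w, h > 0`, and `A = (a₁, a₂, 0)` a floor point with `a₂ > 0`.
Then the line through `O` and `A` meets the glass plane in exactly one point, namely
`I = (a₁·w/(w + a₂), 0, h·a₂/(w + a₂))`; in particular the height of the image is
`h·a₂/(w + a₂)`: "as SW plus AG is to AG, so SH is to HI". -/
theorem mohr_II_prop19_perspective (O A I : EuclideanSpace ℝ (Fin 3))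
    (w h a₁ a₂ : ℝ) (hw : 0 < w) (hh : 0 < h) (ha₂ : 0 < a₂)
    (hO : O 0 = 0 ∧ O 1 = -w ∧ O 2 = h)
    (hA : A 0 = a₁ ∧ A 1 = a₂ ∧ A 2 = 0)
    (hI : I 0 = a₁ * w / (w + a₂) ∧ I 1 = 0 ∧ I 2 = h * a₂ / (w + a₂)) :
    (affineSpan ℝ ({O, A} : Set (EuclideanSpace ℝ (Fin 3))) : Set (EuclideanSpace ℝ (Fin 3)))
        ∩ {p : EuclideanSpace ℝ (Fin 3) | p 1 = 0} = {I} := by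
  obtain ⟨hO0, hO1, hO2⟩ := hO
  obtain ⟨hA0, hA1, hA2⟩ := hA
  obtain ⟨hI0, hI1, hI2⟩ := hI
  have hwa : w + a₂ ≠ 0 := by positivity
  have key : ∀ p : EuclideanSpace ℝ (Fin 3),
      p ∈ line[ℝ, O, A] ↔ ∃ r : ℝ, r • (A - O) = p - O := by
    intro p
    conv_lhs => rw [show p = (p - O) +ᵥ O from (sub_add_cancel p O).symm]
    simpa using vadd_left_mem_affineSpan_pair (k := ℝ) (p₁ := O) (p₂ := A) (v := p - O)
  ext p
  simp only [Set.mem_inter_iff, Set.mem_setOf_eq, Set.mem_singleton_iff, SetLike.mem_coe]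
  rw [key]
  constructor
  · rintro ⟨⟨r, hr⟩, hp1⟩
    have hco : ∀ i, r * (A i - O i) = p i - O i := fun i => by simpa using congrArg (fun v : EuclideanSpace ℝ (Fin 3) => v i) hr
    have h0 := hco 0
    have h1 := hco 1
    have h2 := hco 2
    rw [hO0, hA0] at h0
    rw [hO1, hA1, hp1] at h1
    rw [hO2, hA2] at h2
    ext i
    fin_cases i
    · show p 0 = I 0
      rw [hI0, eq_div_iff hwa]
      linear_combination a₁ * h1 - (w + a₂) * h0
    · show p 1 = I 1
      rw [hI1, hp1]
    · show p 2 = I 2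
      rw [hI2, eq_div_iff hwa]
      linear_combination -h * h1 - (w + a₂) * h2
  · rintro rfl
    refine ⟨⟨w / (w + a₂), ?_⟩, hI1⟩
    ext i
    fin_cases i
    · show w / (w + a₂) * (A 0 - O 0) = p 0 - O 0
      rw [hO0, hA0, hI0]; ring
    · show w / (w + a₂) * (A 1 - O 1) = p 1 - O 1
      rw [hO1, hA1, hI1]; field_simp; ring
    · show w / (w + a₂) * (A 2 - O 2) = p 2 - O 2
      rw [hO2, hA2, hI2]; field_simp; ring
end
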